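/- arXiv:2507.08521 — 8 statements merged into one kernel-verified Lean document; each statement's English description precedes it below -/
import Mathlib

section
/- Representation theorem for proper L⁰-labeling functions: Let S = Conv_{L⁰}{x_1,…,x_n} be an (n−1)-dimensional L⁰-simplex in L⁰(𝓕,ℝ^d), 𝒮 an L⁰-simplicial subdivision of S, and enumerate ext(𝒮') = {y_1,…,y_K}. Then for every proper L⁰-labeling function φ of 𝒮 there exist finitely many proper labeling functions ψ_1,…,ψ_M of 𝒮' and a measurable partition A_1,…,A_M of Ω such that for every k ∈ {1,…,K}, φ(y_k) = ∑_{m=1}^M 1_{A_m} ψ_m(y_k), i.e., φ(y_k) is the equivalence class of the function taking the constant value ψ_m(y_k) on A_m. -/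
open MeasureTheory Filter Set Topology

noncomputable section

namespace RandomBrouwer

variable {Ω : Type*} [MeasurableSpace Ω]

/-- `ℝ^d` with the Euclidean norm. -/
abbrev Ed (d : ℕ) : Type := EuclideanSpace ℝ (Fin d)

/-- `L⁰(𝓕,ℝ^d)`: equivalence classes (mod a.e. equality) of measurable functions `Ω → ℝ^d`. -/
abbrev L0 (μ : Measure Ω) (d : ℕ) : Type _ := Ω →ₘ[μ] Ed d

/-- A countable measurable partition of `Ω`. -/
def IsPartition (A : ℕ → Set Ω) : Prop :=
  (∀ n, MeasurableSet (A n)) ∧ (Pairwise fun m n => Disjoint (A m) (A n)) ∧ (⋃ n, A n) = univ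

/-- A finite measurable partition of `Ω`. -/
def IsFinPartition {m : ℕ} (A : Fin m → Set Ω) : Prop :=
  (∀ i, MeasurableSet (A i)) ∧ (Pairwise fun i j => Disjoint (A i) (A j)) ∧ (⋃ i, A i) = univ

variable (μ : Measure Ω) (d : ℕ)

/-- `z = ∑ₙ 1_{A n} (v n)`: `z` is the countable concatenation of the sequence `v`
along the countable measurable partition `A`. -/
def IsConcat {β : Type*} [TopologicalSpace β] (A : ℕ → Set Ω) (v : ℕ → Ω →ₘ[μ] β)
    (z : Ω →ₘ[μ] β) : Prop :=
  ∀ n, ∀ᵐ ω ∂μ, ω ∈ A n → z ω = v n ω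

/-- `z = ∑ᵢ 1_{A i} (v i)` for a finite partition. -/
def IsFinConcat {β : Type*} [TopologicalSpace β] {m : ℕ} (A : Fin m → Set Ω)
    (v : Fin m → Ω →ₘ[μ] β) (z : Ω →ₘ[μ] β) : Prop :=
  ∀ i, ∀ᵐ ω ∂μ, ω ∈ A i → z ω = v i ω

/-- A σ-stable subset of `L⁰(𝓕,ℝ^d)`. -/
def SigmaStable (G : Set (L0 μ d)) : Prop :=
  ∀ A : ℕ → Set Ω, IsPartition A → ∀ v : ℕ → L0 μ d, (∀ n, v n ∈ G) →
    ∀ z : L0 μ d, IsConcat μ A v z → z ∈ G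

/-- A σ-stable map on `G` (with values classes of `β`-valued functions). -/
def SigmaStableMapOn {β : Type*} [TopologicalSpace β] (G : Set (L0 μ d))
    (f : L0 μ d → (Ω →ₘ[μ] β)) : Prop :=
  ∀ A : ℕ → Set Ω, IsPartition A → ∀ v : ℕ → L0 μ d, (∀ n, v n ∈ G) →
    ∀ z ∈ G, IsConcat μ A v z → IsConcat μ A (fun n => f (v n)) (f z)

/-- A local map on `G`. -/
def LocalOn (G : Set (L0 μ d)) (h : L0 μ d → L0 μ d) : Prop :=
  ∀ x ∈ G, ∀ y ∈ G, ∀ A : Set Ω, MeasurableSet A →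
    (∀ᵐ ω ∂μ, ω ∈ A → x ω = y ω) → ∀ᵐ ω ∂μ, ω ∈ A → h x ω = h y ω

/-- `G` is L⁰-convex. -/
def L0Convex (G : Set (L0 μ d)) : Prop :=
  ∀ x ∈ G, ∀ y ∈ G, ∀ lam : Ω → ℝ, Measurable lam → (∀ ω, lam ω ∈ Icc (0:ℝ) 1) →
    ∀ z : L0 μ d, (∀ᵐ ω ∂μ, z ω = lam ω • x ω + (1 - lam ω) • y ω) → z ∈ G

/-- `G` is a.s. bounded. -/
def ASBounded (G : Set (L0 μ d)) : Prop :=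
  ∃ r : Ω → ℝ, Measurable r ∧ (∀ ω, 0 ≤ r ω) ∧ ∀ x ∈ G, ∀ᵐ ω ∂μ, ‖x ω‖ ≤ r ω

/-- `G` is `𝒯_{ε,λ}`-closed, i.e. sequentially closed under convergence in probability. -/
def TelClosed (G : Set (L0 μ d)) : Prop :=
  ∀ x : ℕ → L0 μ d, (∀ n, x n ∈ G) → ∀ z : L0 μ d,
    TendstoInMeasure μ (fun n => ⇑(x n)) atTop ⇑z → z ∈ G

/-- `f` is continuous in probability (`𝒯_{ε,λ}`-continuous) on `G`. -/
def ContInProbOn (G : Set (L0 μ d)) (f : L0 μ d → L0 μ d) : Prop :=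
  ∀ x : ℕ → L0 μ d, (∀ n, x n ∈ G) → ∀ z ∈ G,
    TendstoInMeasure μ (fun n => ⇑(x n)) atTop ⇑z →
    TendstoInMeasure μ (fun n => ⇑(f (x n))) atTop ⇑(f z)

/-- `y` is a random subsequence of `v`. -/
def IsRandomSubseq (v : ℕ → L0 μ d) (y : ℕ → L0 μ d) : Prop :=
  ∃ nk : ℕ → Ω → ℕ, (∀ k, Measurable (nk k)) ∧ (∀ k ω, nk k ω < nk (k + 1) ω) ∧
    ∀ k, ∀ᵐ ω ∂μ, y k ω = v (nk k ω) ω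

/-- `f` is random sequentially continuous on the σ-stable set `G`. -/
def RandSeqContOn (G : Set (L0 μ d)) (f : L0 μ d → L0 μ d) : Prop :=
  ∀ v : ℕ → L0 μ d, (∀ k, v k ∈ G) → ∀ z ∈ G,
    TendstoInMeasure μ (fun k => ⇑(v k)) atTop ⇑z →
    ∃ y : ℕ → L0 μ d, (∀ k, y k ∈ G) ∧ IsRandomSubseq μ d v y ∧
      TendstoInMeasure μ (fun k => ⇑(f (y k))) atTop ⇑(f z)

/-- The locally L⁰-convex topology `𝒯_c` on `L⁰(𝓕,ℝ^d)`, generated by random open balls. -/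
def Tc : TopologicalSpace (L0 μ d) :=
  .generateFrom {B | ∃ (x : L0 μ d) (r : Ω → ℝ), Measurable r ∧ (∀ᵐ ω ∂μ, 0 < r ω) ∧
    B = {y : L0 μ d | ∀ᵐ ω ∂μ, ‖x ω - y ω‖ < r ω}}

/-- The L⁰-convex hull `Conv_{L⁰}{x i : i}` of finitely many elements of `L⁰(𝓕,ℝ^d)`. -/
def ConvL0 {ι : Type*} [Fintype ι] (x : ι → L0 μ d) : Set (L0 μ d) :=
  {z | ∃ lam : ι → Ω → ℝ, (∀ i, Measurable (lam i)) ∧ (∀ i ω, lam i ω ∈ Icc (0:ℝ) 1) ∧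
    (∀ ω, ∑ i, lam i ω = 1) ∧ ∀ᵐ ω ∂μ, z ω = ∑ i, lam i ω • x i ω}

/-- `x 0, …, x (n-1)` are L⁰-affinely independent. -/
def L0AffineIndep {n : ℕ} [NeZero n] (x : Fin n → L0 μ d) : Prop :=
  ∀ ξ : Fin n → Ω → ℝ, (∀ i, Measurable (ξ i)) →
    (∀ᵐ ω ∂μ, ∑ i ∈ Finset.univ.erase (0 : Fin n), ξ i ω • (x i ω - x 0 ω) = 0) →
    ∀ i, i ≠ (0 : Fin n) → ∀ᵐ ω ∂μ, ξ i ω = 0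

/-- The σ-stable hull of a set `H`. -/
def sigmaHull (H : Set (L0 μ d)) : Set (L0 μ d) :=
  {z | ∃ (A : ℕ → Set Ω) (v : ℕ → L0 μ d), IsPartition A ∧ (∀ k, v k ∈ H) ∧ IsConcat μ A v z}

/-- An L⁰-simplicial subdivision of the L⁰-simplex with vertices `x 0, …, x (n-1)`,
together with its counterpart simplicial subdivision. -/
structure L0Subdivision {n : ℕ} [NeZero n] (x : Fin n → L0 μ d) where
  I : ℕ
  hI : 0 < I
  T : Fin I → Fin n → L0 μ d
  indepL0 : ∀ i, L0AffineIndep μ d (T i)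
  cover : ConvL0 μ d x = sigmaHull μ d (⋃ i, ConvL0 μ d (T i))
  faces : ∀ i j, ConvL0 μ d (T i) ∩ ConvL0 μ d (T j) = ∅ ∨
    ∃ J1 J2 : Finset (Fin n), J1.Nonempty ∧ J2.Nonempty ∧
      ConvL0 μ d (T i) ∩ ConvL0 μ d (T j) = ConvL0 μ d (fun k : J1 => T i k) ∧
      ConvL0 μ d (T i) ∩ ConvL0 μ d (T j) = ConvL0 μ d (fun k : J2 => T j k)
  indepR : ∀ i, AffineIndependent ℝ (T i)
  cover' : convexHull ℝ (Set.range x) = ⋃ i, convexHull ℝ (Set.range (T i))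
  faces' : ∀ i j, convexHull ℝ (Set.range (T i)) ∩ convexHull ℝ (Set.range (T j)) = ∅ ∨
    ∃ J1 J2 : Finset (Fin n), J1.Nonempty ∧ J2.Nonempty ∧
      convexHull ℝ (Set.range (T i)) ∩ convexHull ℝ (Set.range (T j))
        = convexHull ℝ (T i '' J1) ∧
      convexHull ℝ (Set.range (T i)) ∩ convexHull ℝ (Set.range (T j))
        = convexHull ℝ (T j '' J2)

/-- The set of vertices `ext(𝒮')` of the counterpart subdivision. -/
def L0Subdivision.extVerts {n : ℕ} [NeZero n] {x : Fin n → L0 μ d}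
    (S : L0Subdivision μ d x) : Set (L0 μ d) :=
  ⋃ i, Set.range (S.T i)

/-- `φ` is a proper L⁰-labeling function on the domain `D` (w.r.t. the base vertices `x`),
with labels in `{1,…,n}` (label `i+1` corresponding to the vertex `x i`). -/
def ProperL0Label {n : ℕ} [NeZero n] (x : Fin n → L0 μ d) (D : Set (L0 μ d))
    (φ : L0 μ d → (Ω →ₘ[μ] ℕ)) : Prop :=
  ∀ y ∈ D, ∀ lam : Fin n → Ω → ℝ, (∀ i, Measurable (lam i)) →
    (∀ i ω, lam i ω ∈ Icc (0:ℝ) 1) → (∀ ω, ∑ i, lam i ω = 1) →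
    (∀ᵐ ω ∂μ, y ω = ∑ i, lam i ω • x i ω) →
    ∀ i : Fin n, ∀ᵐ ω ∂μ, ¬(φ y ω = (i : ℕ) + 1 ∧ lam i ω = 0)

/-- `ψ` is a (classical) proper labeling function on the vertex set `V` of the counterpart
subdivision, with labels in `{1,…,n}`. -/
def ProperLabelR {n : ℕ} [NeZero n] (x : Fin n → L0 μ d) (V : Set (L0 μ d))
    (ψ : L0 μ d → ℕ) : Prop :=
  ∀ y ∈ V, ∀ α : Fin n → ℝ, (∀ i, α i ∈ Icc (0:ℝ) 1) → (∑ i, α i = 1) →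
    (y = ∑ i, α i • x i) → ∃ i : Fin n, ψ y = (i : ℕ) + 1 ∧ 0 < α i

/-- `h` is an L⁰-extreme point of `S`. -/
def IsL0ExtremePoint (S : Set (L0 μ d)) (h : L0 μ d) : Prop :=
  h ∈ S ∧ ∀ x ∈ S, ∀ y ∈ S, ∀ lam : Ω → ℝ, Measurable lam →
    (∀ᵐ ω ∂μ, lam ω ∈ Ioo (0:ℝ) 1) →
    (∀ᵐ ω ∂μ, h ω = lam ω • x ω + (1 - lam ω) • y ω) → x = h ∧ y = h

private lemma aeeq_coeFn_sum {Ω : Type*} [MeasurableSpace Ω] {μ : Measure Ω} {d : ℕ}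
    {ι : Type*} (s : Finset ι) (f : ι → L0 μ d) :
    ⇑(∑ i ∈ s, f i) =ᵐ[μ] fun ω => ∑ i ∈ s, f i ω := by
  classical
  induction s using Finset.induction_on with
  | empty => simp only [Finset.sum_empty]; exact MeasureTheory.AEEqFun.coeFn_zero (β := Ed d) (μ := μ)
  | @insert a s h ih =>
    rw [Finset.sum_insert h]
    filter_upwards [MeasureTheory.AEEqFun.coeFn_add (f a) (∑ i ∈ s, f i), ih] with ω h1 h2
    simp only [Finset.sum_insert h, h1, Pi.add_apply, h2]

private lemma subset_sigmaHull {Ω : Type*} [MeasurableSpace Ω] (μ : Measure Ω) (d : ℕ)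
    (H : Set (L0 μ d)) : H ⊆ sigmaHull μ d H := by
  intro z hz
  refine ⟨fun j => if j = 0 then Set.univ else ∅, fun _ => z, ⟨?_, ?_, ?_⟩, fun _ => hz, ?_⟩
  · intro j; by_cases hj : j = 0 <;> simp [hj]
  · intro i j hij
    by_cases hi : i = 0
    · subst hi
      have : j ≠ 0 := fun h => hij h.symm
      simp [this]
    · simp [hi]
  · apply Set.eq_univ_iff_forall.mpr
    intro ω
    exact Set.mem_iUnion.mpr ⟨0, by simp⟩
  · intro k
    exact Filter.Eventually.of_forall fun ω _ => rfl

/-- Representation theorem for proper L⁰-labeling functions. -/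
theorem representation_of_proper_L0_labeling {Ω : Type*} [MeasurableSpace Ω] (μ : Measure Ω)
    [IsProbabilityMeasure μ] (d : ℕ) (hd : 0 < d) (n : ℕ) [NeZero n]
    (x : Fin n → L0 μ d) (hx : L0AffineIndep μ d x)
    (𝒮 : L0Subdivision μ d x)
    (K : ℕ) (y : Fin K → L0 μ d) (hy : Set.range y = 𝒮.extVerts μ d)
    (φ : L0 μ d → (Ω →ₘ[μ] ℕ))
    (hval : ∀ z ∈ sigmaHull μ d (𝒮.extVerts μ d), ∀ᵐ ω ∂μ, 1 ≤ φ z ω ∧ φ z ω ≤ n)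
    (hstab : SigmaStableMapOn μ d (sigmaHull μ d (𝒮.extVerts μ d)) φ)
    (hproper : ProperL0Label μ d x (sigmaHull μ d (𝒮.extVerts μ d)) φ) :
    ∃ (M : ℕ) (_ : 0 < M) (ψ : Fin M → L0 μ d → ℕ) (A : Fin M → Set Ω),
      (∀ m, ProperLabelR μ d x (𝒮.extVerts μ d) (ψ m)) ∧
      IsFinPartition A ∧
      ∀ k : Fin K, ∀ m : Fin M, ∀ᵐ ω ∂μ, ω ∈ A m → φ (y k) ω = ψ m (y k) := by
  classical
  have hsub := subset_sigmaHull μ d (𝒮.extVerts μ d)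
  have hyD : ∀ k, y k ∈ sigmaHull μ d (𝒮.extVerts μ d) := by
    intro k
    apply hsub
    rw [← hy]
    exact Set.mem_range_self k
  have npos : 0 < n := Nat.pos_of_ne_zero (NeZero.ne n)
  have hφm : ∀ k, Measurable (⇑(φ (y k))) := fun k => (φ (y k)).measurable
  set g : Fin K → Ω → Fin n :=
    fun k ω => ⟨(φ (y k) ω - 1) % n, Nat.mod_lt _ npos⟩ with hgdef
  have hgm : ∀ k, Measurable (g k) := by
    intro k
    have h1 : Measurable (fun a : ℕ => (⟨(a - 1) % n, Nat.mod_lt _ npos⟩ : Fin n)) :=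
      measurable_from_top
    exact h1.comp (hφm k)
  have hgcongr : ∀ k k', y k = y k' → g k = g k' := by
    intro k k' h
    funext ω
    simp only [hgdef, h]
  set M : ℕ := Fintype.card (Fin K → Fin n) with hMdef
  have hM : 0 < M := Fintype.card_pos_iff.mpr ⟨fun _ => ⟨0, npos⟩⟩
  set e : Fin M ≃ (Fin K → Fin n) := (Fintype.equivFin (Fin K → Fin n)).symm with hedef
  set A0 : Fin M → Set Ω := fun m => {ω | ∀ k, g k ω = e m k} with hA0def
  have hA0m : ∀ m, MeasurableSet (A0 m) := by
    intro m
    have : A0 m = ⋂ k, g k ⁻¹' {e m k} := by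
      ext ω; simp [hA0def]
    rw [this]
    exact MeasurableSet.iInter fun k => (hgm k) (measurableSet_singleton _)
  have hA0disj : ∀ i j : Fin M, i ≠ j → Disjoint (A0 i) (A0 j) := by
    intro i j hij
    rw [Set.disjoint_left]
    intro ω hωi hωj
    have hne : e i ≠ e j := fun h => hij (e.injective h)
    obtain ⟨k, hk⟩ := Function.ne_iff.mp hne
    exact hk ((hωi k).symm.trans (hωj k))
  have hA0mem : ∀ ω : Ω, ω ∈ A0 (e.symm (fun k => g k ω)) := by
    intro ω k
    rw [e.apply_symm_apply]
  have hA0cover : (⋃ m, A0 m) = Set.univ := by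
    apply Set.eq_univ_iff_forall.mpr
    intro ω
    exact Set.mem_iUnion.mpr ⟨_, hA0mem ω⟩
  -- key: on A0 m, φ (y k) takes the value e m k + 1
  have key1 : ∀ (k : Fin K) (m : Fin M),
      ∀ᵐ ω ∂μ, ω ∈ A0 m → φ (y k) ω = (e m k : ℕ) + 1 := by
    intro k m
    filter_upwards [hval (y k) (hyD k)] with ω hb hω
    obtain ⟨h1, h2⟩ := hb
    have hv : (φ (y k) ω - 1) % n = (e m k : ℕ) := congrArg Fin.val (hω k)
    have hlt : φ (y k) ω - 1 < n := by omega
    rw [Nat.mod_eq_of_lt hlt] at hv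
    omega
  set ψ0 : Fin M → L0 μ d → ℕ :=
    fun m z => if h : ∃ k, y k = z then ((e m h.choose : ℕ) + 1) else 0 with hψ0def
  have lab_const : ∀ m : Fin M, (A0 m).Nonempty → ∀ k k', y k = y k' → e m k = e m k' := by
    intro m ⟨ω, hω⟩ k k' h
    have hg' : g k = g k' := hgcongr k k' h
    have h1 := hω k
    have h2 := hω k'
    rw [hg'] at h1
    exact h1.symm.trans h2
  have ψ0_eval : ∀ m : Fin M, (A0 m).Nonempty → ∀ k, ψ0 m (y k) = (e m k : ℕ) + 1 := by
    intro m hne k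
    have h : ∃ k', y k' = y k := ⟨k, rfl⟩
    rw [hψ0def]
    simp only [dif_pos h]
    exact congrArg (· + 1) (congrArg Fin.val (lab_const m hne h.choose k h.choose_spec))
  have hproper0 : ∀ m : Fin M, 0 < μ (A0 m) →
      ProperLabelR μ d x (𝒮.extVerts μ d) (ψ0 m) := by
    intro m hm z hz α hα hsum hrep
    rw [← hy] at hz
    have hex : ∃ k, y k = z := hz
    have hk₀ : y hex.choose = z := hex.choose_spec
    refine ⟨e m hex.choose, by simp only [hψ0def, dif_pos hex], ?_⟩
    set i := e m hex.choose with hidef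
    have hcoe : ⇑(y hex.choose) = ⇑(∑ j, α j • x j) := by rw [hk₀, hrep]
    have hrep' : ∀ᵐ ω ∂μ, (y hex.choose) ω = ∑ j, α j • x j ω := by
      have h1 := aeeq_coeFn_sum (μ := μ) Finset.univ (fun j => α j • x j)
      have h2 : ∀ᵐ ω ∂μ, ∀ j : Fin n, (α j • x j) ω = α j • x j ω := by
        rw [MeasureTheory.ae_all_iff]
        intro j
        exact MeasureTheory.AEEqFun.coeFn_smul (α j) (x j)
      filter_upwards [h1, h2] with ω hω1 hω2
      rw [hcoe, hω1]
      exact Finset.sum_congr rfl fun j _ => hω2 j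
    have hp := hproper (y hex.choose) (hyD hex.choose) (fun j _ => α j)
      (fun j => measurable_const) (fun j ω => hα j) (fun ω => hsum) hrep' i
    by_contra hneg
    have hzero : α i = 0 := le_antisymm (not_lt.mp hneg) (hα i).1
    have hbad : ∀ᵐ ω ∂μ, ω ∉ A0 m := by
      filter_upwards [key1 hex.choose m, hp] with ω h1 h2 hmem
      exact h2 ⟨h1 hmem, hzero⟩
    exact absurd (measure_eq_zero_iff_ae_notMem.mpr hbad) hm.ne'
  -- a positive-measure cell exists
  have hposex : ∃ m₀ : Fin M, 0 < μ (A0 m₀) := by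
    by_contra h
    push_neg at h
    have hz : ∀ m, μ (A0 m) = 0 := fun m => le_antisymm (h m) zero_le
    have : μ (⋃ m, A0 m) = 0 := measure_iUnion_null hz
    rw [hA0cover] at this
    simp [measure_univ] at this
  obtain ⟨m₀, hm₀⟩ := hposex
  set N : Set Ω := ⋃ m, (if μ (A0 m) = 0 then A0 m else ∅) with hNdef
  have hNm : MeasurableSet N := by
    apply MeasurableSet.iUnion
    intro m
    by_cases h : μ (A0 m) = 0 <;> simp [h, hA0m m]
  have hNnull : μ N = 0 := by
    apply measure_iUnion_null
    intro m
    by_cases h : μ (A0 m) = 0 <;> simp [h]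
  have hNdisj : ∀ j : Fin M, μ (A0 j) ≠ 0 → Disjoint N (A0 j) := by
    intro j hj
    rw [Set.disjoint_left]
    intro ω hω hωj
    rw [hNdef, Set.mem_iUnion] at hω
    obtain ⟨m', hm'⟩ := hω
    by_cases h0 : μ (A0 m') = 0
    · rw [if_pos h0] at hm'
      have hne : m' ≠ j := fun h => hj (h ▸ h0)
      exact Set.disjoint_left.mp (hA0disj m' j hne) hm' hωj
    · rw [if_neg h0] at hm'
      exact hm'
  set A : Fin M → Set Ω :=
    fun m => if μ (A0 m) = 0 then ∅ else if m = m₀ then A0 m₀ ∪ N else A0 m with hAdef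
  set ψ : Fin M → L0 μ d → ℕ :=
    fun m => if μ (A0 m) = 0 then ψ0 m₀ else ψ0 m with hψdef
  refine ⟨M, hM, ψ, A, ?_, ⟨?_, ?_, ?_⟩, ?_⟩
  · -- properness
    intro m
    rw [hψdef]
    by_cases h0 : μ (A0 m) = 0
    · simp only [if_pos h0]
      exact hproper0 m₀ hm₀
    · simp only [if_neg h0]
      exact hproper0 m (pos_iff_ne_zero.mpr h0)
  · -- measurability
    intro m
    rw [hAdef]
    by_cases h0 : μ (A0 m) = 0
    · simp [h0]
    · by_cases hm : m = m₀
      · simp [h0, hm, hm₀.ne', (hA0m m₀).union hNm]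
      · simp [h0, hm, hA0m]
  · -- pairwise disjoint
    intro i j hij
    rw [hAdef]
    by_cases hi : μ (A0 i) = 0
    · simp [hi]
    · by_cases hj : μ (A0 j) = 0
      · simp [hj]
      · simp only [if_neg hi, if_neg hj]
        by_cases him : i = m₀
        · have hjm : ¬ j = m₀ := fun h => hij (him.trans h.symm)
          have hij' : m₀ ≠ j := fun h => hjm (h.symm)
          simp only [if_pos him, if_neg hjm]
          exact Set.disjoint_union_left.mpr ⟨hA0disj m₀ j hij', hNdisj j hj⟩
        · simp only [if_neg him]
          by_cases hjm : j = m₀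
          · have hij' : m₀ ≠ i := fun h => him h.symm
            simp only [if_pos hjm]
            exact (Set.disjoint_union_left.mpr ⟨hA0disj m₀ i hij', hNdisj i hi⟩).symm
          · simp only [if_neg hjm]
            exact hA0disj i j hij
  · -- cover
    apply Set.eq_univ_iff_forall.mpr
    intro ω
    have hm₀0 : ¬ μ (A0 m₀) = 0 := hm₀.ne'
    set m := e.symm (fun k => g k ω) with hmdef
    have hωm : ω ∈ A0 m := hA0mem ω
    rw [Set.mem_iUnion]
    by_cases h0 : μ (A0 m) = 0
    · refine ⟨m₀, ?_⟩
      rw [hAdef]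
      simp only [if_neg hm₀0, if_pos rfl]
      right
      rw [hNdef, Set.mem_iUnion]
      exact ⟨m, by rw [if_pos h0]; exact hωm⟩
    · refine ⟨m, ?_⟩
      rw [hAdef]
      simp only [if_neg h0]
      by_cases hm : m = m₀
      · subst hm
        simp only [if_pos rfl]
        exact Or.inl hωm
      · simp only [if_neg hm]
        exact hωm
  · -- representation
    intro k m
    by_cases h0 : μ (A0 m) = 0
    · have : A m = ∅ := by rw [hAdef]; simp [h0]
      rw [this]
      filter_upwards with ω h
      exact absurd h (Set.notMem_empty ω)
    · have hne : (A0 m).Nonempty := MeasureTheory.nonempty_of_measure_ne_zero h0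
      have hψe : ψ m (y k) = (e m k : ℕ) + 1 := by
        rw [hψdef]
        simp only [if_neg h0]
        exact ψ0_eval m hne k
      by_cases hm : m = m₀
      · subst hm
        have hA : A m = A0 m ∪ N := by rw [hAdef]; simp [h0]
        rw [hA]
        filter_upwards [key1 k m, measure_eq_zero_iff_ae_notMem.mp hNnull] with ω h1 h2 hmem
        rcases hmem with hA' | hN'
        · rw [hψe]; exact h1 hA'
        · exact absurd hN' h2
      · have hA : A m = A0 m := by rw [hAdef]; simp [h0, hm]
        rw [hA]
        filter_upwards [key1 k m] with ω h1 hmem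
        rw [hψe]
        exact h1 hmem

end RandomBrouwer
end
end

section
/- Let S = Conv_{L⁰}{x_1,…,x_n} be an (n−1)-dimensional L⁰-simplex in L⁰(𝓕,ℝ^d). For any sequence S^m = Conv_{L⁰}{x_1^m,…,x_n^m} (m ∈ ℕ) of (n−1)-dimensional L⁰-simplexes contained in S and any countable measurable partition (A_m) of Ω: (a) the set ∑_m 1_{A_m} S^m := {∑_m 1_{A_m} z_m : z_m ∈ S^m for each m} equals Conv_{L⁰}{∑_m 1_{A_m} x_1^m,…,∑_m 1_{A_m} x_n^m}; and (b) the elements ∑_m 1_{A_m} x_1^m,…,∑_m 1_{A_m} x_n^m are L⁰-affinely independent. Hence ∑_m 1_{A_m} S^m is an (n−1)-dimensional L⁰-simplex contained in S with these vertices. -/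
open MeasureTheory Filter Set Topology

noncomputable section

namespace RandomBrouwer

variable {Ω : Type*} [MeasurableSpace Ω]

variable (μ : Measure Ω) (d : ℕ)

lemma IsPartition.exists_mem {A : ℕ → Set Ω} (hA : IsPartition A) (ω : Ω) : ∃ m, ω ∈ A m :=
  Set.mem_iUnion.mp (hA.2.2 ▸ Set.mem_univ ω)

open Classical in
/-- A concatenation of convex combinations is a convex combination of the
concatenated vertices. -/
lemma concat_mem_convL0 {μ : Measure Ω} {d n : ℕ} [NeZero n] (xm : ℕ → Fin n → L0 μ d)
    (A : ℕ → Set Ω) (hA : IsPartition A) (X : Fin n → L0 μ d)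
    (hX : ∀ j, IsConcat μ A (fun m => xm m j) (X j))
    (v : ℕ → L0 μ d) (hv : ∀ m, v m ∈ ConvL0 μ d (xm m))
    (z : L0 μ d) (hz : IsConcat μ A v z) : z ∈ ConvL0 μ d X := by
  choose lamm hmeas hIcc hsum hae using hv
  have hex := hA.exists_mem
  set N : Ω → ℕ := fun ω => Nat.find (hex ω) with hN
  refine ⟨fun i ω => lamm (N ω) i ω, ?_, ?_, ?_, ?_⟩
  · exact fun i => Measurable.find (p := fun m ω => ω ∈ A m) (fun m => hmeas m i) (fun m => hA.1 m) hex
  · exact fun i ω => hIcc (N ω) i ω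
  · exact fun ω => hsum (N ω) ω
  · have h1 : ∀ᵐ ω ∂μ, ∀ m, ω ∈ A m → z ω = v m ω := ae_all_iff.mpr hz
    have h2 : ∀ᵐ ω ∂μ, ∀ m, v m ω = ∑ i, lamm m i ω • xm m i ω := ae_all_iff.mpr hae
    have h3 : ∀ᵐ ω ∂μ, ∀ j m, ω ∈ A m → X j ω = xm m j ω := by
      rw [ae_all_iff]; exact fun j => ae_all_iff.mpr (hX j)
    filter_upwards [h1, h2, h3] with ω h1 h2 h3
    have hmem : ω ∈ A (N ω) := Nat.find_spec (hex ω)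
    rw [h1 (N ω) hmem, h2 (N ω)]
    exact Finset.sum_congr rfl fun i _ => by rw [h3 i (N ω) hmem]

/-- Composition of convex combinations. -/
lemma convL0_trans {μ : Measure Ω} {d n : ℕ} [NeZero n] {x Y : Fin n → L0 μ d}
    (hY : ∀ j, Y j ∈ ConvL0 μ d x) {z : L0 μ d} (hz : z ∈ ConvL0 μ d Y) :
    z ∈ ConvL0 μ d x := by
  obtain ⟨θ, hθm, hθI, hθs, hθae⟩ := hz
  choose mu hmum hmuI hmus hmuae using hY
  refine ⟨fun i ω => ∑ j, θ j ω * mu j i ω, ?_, ?_, ?_, ?_⟩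
  · exact fun i => Finset.measurable_sum _ fun j _ => (hθm j).mul (hmum j i)
  · intro i ω
    have hnn : ∀ i, 0 ≤ ∑ j, θ j ω * mu j i ω := fun i =>
      Finset.sum_nonneg fun j _ => mul_nonneg (hθI j ω).1 (hmuI j i ω).1
    constructor
    · exact hnn i
    · calc ∑ j, θ j ω * mu j i ω ≤ ∑ i', ∑ j, θ j ω * mu j i' ω :=
            Finset.single_le_sum (fun i' _ => hnn i') (Finset.mem_univ i)
        _ = 1 := by
            rw [Finset.sum_comm]
            simp_rw [← Finset.mul_sum]
            simp only [hmus]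
            simpa using hθs ω
  · intro ω
    rw [Finset.sum_comm]
    simp_rw [← Finset.mul_sum]
    simp only [hmus]
    simpa using hθs ω
  · have h2 : ∀ᵐ ω ∂μ, ∀ j, Y j ω = ∑ i, mu j i ω • x i ω := ae_all_iff.mpr hmuae
    filter_upwards [hθae, h2] with ω h1 h2
    rw [h1]
    calc ∑ j, θ j ω • Y j ω = ∑ j, ∑ i, (θ j ω * mu j i ω) • x i ω := by
          refine Finset.sum_congr rfl fun j _ => ?_
          rw [h2 j, Finset.smul_sum]
          exact Finset.sum_congr rfl fun i _ => smul_smul _ _ _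
      _ = ∑ i, ∑ j, (θ j ω * mu j i ω) • x i ω := Finset.sum_comm
      _ = ∑ i, (∑ j, θ j ω * mu j i ω) • x i ω := by
          exact Finset.sum_congr rfl fun i _ => (Finset.sum_smul).symm

/-- Countable concatenations of L⁰-simplexes contained in an L⁰-simplex. -/
theorem concat_of_L0_simplexes {Ω : Type*} [MeasurableSpace Ω] (μ : Measure Ω)
    [IsProbabilityMeasure μ] (d : ℕ) (hd : 0 < d) (n : ℕ) [NeZero n]
    (x : Fin n → L0 μ d) (hx : L0AffineIndep μ d x)
    (xm : ℕ → Fin n → L0 μ d) (hxm : ∀ m, L0AffineIndep μ d (xm m))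
    (hsub : ∀ m, ConvL0 μ d (xm m) ⊆ ConvL0 μ d x)
    (A : ℕ → Set Ω) (hA : IsPartition A)
    (X : Fin n → L0 μ d) (hX : ∀ j, IsConcat μ A (fun m => xm m j) (X j)) :
    -- (a) `∑ₘ 1_{A m} S^m = Conv_{L⁰}{∑ₘ 1_{A m} (x j m) : j}`
    {z : L0 μ d | ∃ v : ℕ → L0 μ d, (∀ m, v m ∈ ConvL0 μ d (xm m)) ∧ IsConcat μ A v z}
        = ConvL0 μ d X ∧
    -- (b) the concatenated vertices are L⁰-affinely independent
    L0AffineIndep μ d X ∧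
    -- hence `∑ₘ 1_{A m} S^m` is an `(n-1)`-dimensional L⁰-simplex contained in `S`
    ConvL0 μ d X ⊆ ConvL0 μ d x := by
  have hvert : ∀ m j, xm m j ∈ ConvL0 μ d (xm m) := by
    intro m j
    refine ⟨fun i _ => if i = j then 1 else 0, fun i => measurable_const, ?_, ?_, ?_⟩
    · intro i ω; by_cases h : i = j <;> simp [h]
    · intro ω; simp [Finset.sum_ite_eq']
    · exact ae_of_all _ fun ω => by simp [ite_smul, Finset.sum_ite_eq']
  have hXj : ∀ j, X j ∈ ConvL0 μ d x := fun j =>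
    concat_mem_convL0 (fun _ => x) A hA x (fun j' m => ae_of_all _ fun ω _ => rfl)
      (fun m => xm m j) (fun m => hsub m (hvert m j)) (X j) (hX j)
  refine ⟨Set.Subset.antisymm ?_ ?_, ?_, fun z hz => convL0_trans hXj hz⟩
  · rintro z ⟨v, hv, hz⟩
    exact concat_mem_convL0 xm A hA X hX v hv z hz
  · rintro z ⟨lam, hlm, hlI, hls, hlae⟩
    set F : ℕ → Ω → Ed d := fun m ω => ∑ i, lam i ω • xm m i ω with hF
    have hFm : ∀ m, AEStronglyMeasurable (F m) μ := fun m =>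
      Finset.aestronglyMeasurable_fun_sum _ fun i _ =>
        ((hlm i).aestronglyMeasurable).smul (xm m i).aestronglyMeasurable
    refine ⟨fun m => AEEqFun.mk (F m) (hFm m), fun m => ⟨lam, hlm, hlI, hls, ?_⟩, ?_⟩
    · filter_upwards [AEEqFun.coeFn_mk (F m) (hFm m)] with ω h using h
    · intro m
      have hXm : ∀ᵐ ω ∂μ, ∀ j, ω ∈ A m → X j ω = xm m j ω := ae_all_iff.mpr fun j => hX j m
      filter_upwards [hlae, AEEqFun.coeFn_mk (F m) (hFm m), hXm] with ω h1 h2 h3 hm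
      rw [h1, h2]
      exact Finset.sum_congr rfl fun i _ => by rw [h3 i hm]
  · intro ξ hξ hsum i hi
    have key : ∀ m, ∀ᵐ ω ∂μ, ω ∈ A m → ξ i ω = 0 := by
      intro m
      have hXm : ∀ᵐ ω ∂μ, ∀ j, ω ∈ A m → X j ω = xm m j ω := ae_all_iff.mpr fun j => hX j m
      have hyp : ∀ᵐ ω ∂μ,
          ∑ j ∈ Finset.univ.erase (0 : Fin n),
            (A m).indicator (ξ j) ω • (xm m j ω - xm m 0 ω) = 0 := by
        filter_upwards [hsum, hXm] with ω h1 h3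
        by_cases hω : ω ∈ A m
        · simp only [Set.indicator_of_mem hω]
          calc ∑ j ∈ Finset.univ.erase (0 : Fin n), ξ j ω • (xm m j ω - xm m 0 ω)
              = ∑ j ∈ Finset.univ.erase (0 : Fin n), ξ j ω • (X j ω - X 0 ω) :=
                Finset.sum_congr rfl fun j _ => by rw [h3 j hω, h3 0 hω]
            _ = 0 := h1
        · simp [Set.indicator_of_notMem hω]
      have := hxm m (fun j => (A m).indicator (ξ j))
        (fun j => (hξ j).indicator (hA.1 m)) hyp i hi
      filter_upwards [this] with ω h hω
      rwa [Set.indicator_of_mem hω] at h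
    filter_upwards [ae_all_iff.mpr key] with ω h
    obtain ⟨m, hm⟩ := hA.exists_mem ω
    exact h m hm

end RandomBrouwer
end
end

section
/- Let S = Conv_{L⁰}{x_1,…,x_n} be an (n−1)-dimensional L⁰-simplex in L⁰(𝓕,ℝ^d) and 𝒮 = {S_1,…,S_I} an L⁰-simplicial subdivision of S. Then S = ⋃ { ∑_{i=1}^I 1_{B_i} S_i : (B_1,…,B_I) a measurable partition of Ω }; that is, x ∈ S if and only if there exist a measurable partition (B_1,…,B_I) of Ω and elements s_i ∈ S_i (i = 1,…,I) such that x = ∑_{i=1}^I 1_{B_i} s_i. -/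
open MeasureTheory Filter Set Topology

noncomputable section

namespace RandomBrouwer

variable {Ω : Type*} [MeasurableSpace Ω]

variable (μ : Measure Ω) (d : ℕ)

section Aux

variable {Ω : Type*} [MeasurableSpace Ω] {μ : Measure Ω} {d : ℕ}

private lemma idx_exists {A : ℕ → Set Ω} (hA : IsPartition A) (ω : Ω) : ∃ n, ω ∈ A n := by
  have h : ω ∈ ⋃ n, A n := by rw [hA.2.2]; trivial
  exact Set.mem_iUnion.mp h

/-- the index of the partition piece containing `ω` -/
private noncomputable def pidx {A : ℕ → Set Ω} (hA : IsPartition A) (ω : Ω) : ℕ :=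
  @Nat.find _ (Classical.decPred _) (idx_exists hA ω)

private lemma mem_pidx {A : ℕ → Set Ω} (hA : IsPartition A) (ω : Ω) : ω ∈ A (pidx hA ω) :=
  @Nat.find_spec _ (Classical.decPred _) (idx_exists hA ω)

private lemma pidx_eq {A : ℕ → Set Ω} (hA : IsPartition A) {ω : Ω} {n : ℕ} (h : ω ∈ A n) :
    pidx hA ω = n := by
  by_contra hne
  exact Set.disjoint_left.mp (hA.2.1 hne) (mem_pidx hA ω) h

private lemma measurable_patch {β : Type*} [MeasurableSpace β] {A : ℕ → Set Ω}
    (hA : IsPartition A) {f : ℕ → Ω → β} (hf : ∀ n, Measurable (f n)) :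
    Measurable (fun ω => f (pidx hA ω) ω) := by
  intro s hs
  have h : (fun ω => f (pidx hA ω) ω) ⁻¹' s = ⋃ n, A n ∩ f n ⁻¹' s := by
    ext ω
    simp only [Set.mem_preimage, Set.mem_iUnion, Set.mem_inter_iff]
    constructor
    · intro h; exact ⟨pidx hA ω, mem_pidx hA ω, h⟩
    · rintro ⟨n, hn, hns⟩; rwa [pidx_eq hA hn]
  rw [h]
  exact MeasurableSet.iUnion fun n => (hA.1 n).inter (hf n hs)

private lemma exists_concat {A : ℕ → Set Ω} (hA : IsPartition A) (v : ℕ → L0 μ d) :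
    ∃ z : L0 μ d, IsConcat μ A v z := by
  have hmeas : ∀ n, Measurable (⇑(v n) : Ω → Ed d) := fun n => (v n).measurable
  have hgm : Measurable (fun ω => v (pidx hA ω) ω) := measurable_patch hA hmeas
  refine ⟨AEEqFun.mk _ hgm.aestronglyMeasurable, fun n => ?_⟩
  filter_upwards [AEEqFun.coeFn_mk _ hgm.aestronglyMeasurable] with ω hω hmem
  rw [hω, pidx_eq hA hmem]

private lemma convL0_concat {ι : Type*} [Fintype ι] (x : ι → L0 μ d) {A : ℕ → Set Ω}
    (hA : IsPartition A) {v : ℕ → L0 μ d} (hv : ∀ n, v n ∈ ConvL0 μ d x)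
    {z : L0 μ d} (hz : IsConcat μ A v z) : z ∈ ConvL0 μ d x := by
  choose lam hlm hlIcc hlsum hlid using hv
  refine ⟨fun i ω => lam (pidx hA ω) i ω, fun i => measurable_patch hA (fun n => hlm n i),
    fun i ω => hlIcc _ i ω, fun ω => hlsum _ ω, ?_⟩
  have h1 : ∀ᵐ ω ∂μ, ∀ n, ω ∈ A n → z ω = v n ω := ae_all_iff.mpr hz
  have h2 : ∀ᵐ ω ∂μ, ∀ n, v n ω = ∑ i, lam n i ω • x i ω := ae_all_iff.mpr hlid
  filter_upwards [h1, h2] with ω h1 h2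
  rw [h1 (pidx hA ω) (mem_pidx hA ω), h2 (pidx hA ω)]

private lemma vertex_mem_convL0 {ι : Type*} [Fintype ι] [DecidableEq ι] (x : ι → L0 μ d)
    (i0 : ι) : x i0 ∈ ConvL0 μ d x := by
  refine ⟨fun i ω => if i = i0 then 1 else 0, fun i => measurable_const, ?_, ?_, ?_⟩
  · intro i ω; by_cases h : i = i0 <;> simp [h]
  · intro ω; simp
  · filter_upwards with ω
    simp [ite_smul]

private lemma mem_sigmaHull_self {H : Set (L0 μ d)} {s : L0 μ d} (hs : s ∈ H) :
    s ∈ sigmaHull μ d H := by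
  refine ⟨fun n => if n = 0 then Set.univ else ∅, fun _ => s, ⟨?_, ?_, ?_⟩, fun _ => hs, ?_⟩
  · intro n; by_cases h : n = 0 <;> simp [h]
  · intro m n hmn
    rcases Nat.eq_zero_or_pos m with hm | hm
    · have : n ≠ 0 := by omega
      simp [hm, this]
    · have : m ≠ 0 := by omega
      simp [this]
  · apply Set.eq_univ_of_subset (Set.subset_iUnion _ 0); simp
  · intro n; filter_upwards with ω _; rfl

end Aux

/-- An L⁰-simplex is the union of the finite concatenations of the members
of any of its L⁰-simplicial subdivisions. -/
theorem simplex_eq_union_of_finConcats {Ω : Type*} [MeasurableSpace Ω] (μ : Measure Ω)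
    [IsProbabilityMeasure μ] (d : ℕ) (hd : 0 < d) (n : ℕ) [NeZero n]
    (x : Fin n → L0 μ d) (hx : L0AffineIndep μ d x)
    (𝒮 : L0Subdivision μ d x) (z : L0 μ d) :
    z ∈ ConvL0 μ d x ↔
      ∃ B : Fin 𝒮.I → Set Ω, IsFinPartition B ∧
        ∃ s : Fin 𝒮.I → L0 μ d, (∀ i, s i ∈ ConvL0 μ d (𝒮.T i)) ∧
          ∀ i, ∀ᵐ ω ∂μ, ω ∈ B i → z ω = s i ω := by
  constructor
  · intro hz
    rw [𝒮.cover] at hz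
    obtain ⟨A, v, hA, hvH, hconc⟩ := hz
    have hmem : ∀ k, ∃ i, v k ∈ ConvL0 μ d (𝒮.T i) := fun k => Set.mem_iUnion.mp (hvH k)
    choose c hc using hmem
    refine ⟨fun i => ⋃ (k : ℕ) (_ : c k = i), A k, ⟨?_, ?_, ?_⟩, ?_⟩
    · intro i
      exact MeasurableSet.iUnion fun k => MeasurableSet.iUnion fun _ => hA.1 k
    · intro i j hij
      rw [Set.disjoint_left]
      intro ω hωi hωj
      obtain ⟨k, hk, hωk⟩ := Set.mem_iUnion₂.mp hωi
      obtain ⟨l, hl, hωl⟩ := Set.mem_iUnion₂.mp hωj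
      have hkl : k ≠ l := by rintro rfl; exact hij (hk ▸ hl ▸ rfl)
      exact Set.disjoint_left.mp (hA.2.1 hkl) hωk hωl
    · apply Set.eq_univ_of_forall
      intro ω
      refine Set.mem_iUnion.mpr ⟨c (pidx hA ω), Set.mem_iUnion₂.mpr ⟨pidx hA ω, rfl, mem_pidx hA ω⟩⟩
    · have hw : ∀ i : Fin 𝒮.I, ∃ s : L0 μ d,
          IsConcat μ A (fun k => if c k = i then v k else 𝒮.T i 0) s :=
        fun i => exists_concat hA _
      choose s hsconc using hw
      refine ⟨s, fun i => ?_, fun i => ?_⟩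
      · refine convL0_concat (𝒮.T i) hA (fun k => ?_) (hsconc i)
        by_cases h : c k = i
        · simp only [if_pos h]; exact h ▸ hc k
        · simp only [if_neg h]; exact vertex_mem_convL0 (𝒮.T i) 0
      · have h1 : ∀ᵐ ω ∂μ, ∀ k, ω ∈ A k → z ω = v k ω := ae_all_iff.mpr hconc
        have h2 : ∀ᵐ ω ∂μ, ∀ k, ω ∈ A k →
            s i ω = (if c k = i then v k else 𝒮.T i 0) ω := ae_all_iff.mpr (hsconc i)
        filter_upwards [h1, h2] with ω h1 h2 hωB
        obtain ⟨k, hk, hωk⟩ := Set.mem_iUnion₂.mp hωB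
        rw [h1 k hωk, h2 k hωk, if_pos hk]
  · rintro ⟨B, hB, s, hs, hzs⟩
    have hsx : ∀ i, s i ∈ ConvL0 μ d x := fun i => by
      rw [𝒮.cover]
      exact mem_sigmaHull_self (Set.mem_iUnion.mpr ⟨i, hs i⟩)
    set A : ℕ → Set Ω := fun k => if h : k < 𝒮.I then B ⟨k, h⟩ else ∅ with hAdef
    set v : ℕ → L0 μ d := fun k => if h : k < 𝒮.I then s ⟨k, h⟩ else s ⟨0, 𝒮.hI⟩ with hvdef
    have hA : IsPartition A := by
      refine ⟨?_, ?_, ?_⟩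
      · intro k
        simp only [hAdef]
        split
        · exact hB.1 _
        · exact MeasurableSet.empty
      · intro k l hkl
        simp only [hAdef]
        split
        · split
          · refine hB.2.1 ?_
            simp only [ne_eq, Fin.mk.injEq]
            exact hkl
          · exact Set.disjoint_empty _
        · exact Set.empty_disjoint _
      · apply Set.eq_univ_of_forall
        intro ω
        have : ω ∈ ⋃ i, B i := by rw [hB.2.2]; trivial
        obtain ⟨i, hi⟩ := Set.mem_iUnion.mp this
        refine Set.mem_iUnion.mpr ⟨(i : ℕ), ?_⟩
        simp only [hAdef, dif_pos i.isLt, Fin.eta]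
        exact hi
    have hconc : IsConcat μ A v z := by
      intro k
      by_cases h : k < 𝒮.I
      · filter_upwards [hzs ⟨k, h⟩] with ω hω hωA
        simp only [hAdef, dif_pos h] at hωA
        simp only [hvdef, dif_pos h]
        exact hω hωA
      · filter_upwards with ω hωA
        simp only [hAdef, dif_neg h] at hωA
        exact absurd hωA (Set.notMem_empty ω)
    refine convL0_concat x hA (fun k => ?_) hconc
    simp only [hvdef]
    split <;> apply hsx

end RandomBrouwer
end
end

section
/- Let S = Conv_{L⁰}{x_1,…,x_n} be an (n−1)-dimensional L⁰-simplex in L⁰(𝓕,ℝ^d). Then the set of L⁰-extreme points of S is exactly the σ-stable hull of the vertex set {x_1,…,x_n}; explicitly, h ∈ S is an L⁰-extreme point of S if and only if there is a measurable partition (A_1,…,A_n) of Ω such that h = ∑_{i=1}^n 1_{A_i} x_i. -/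
open MeasureTheory Filter Set Topology

noncomputable section

namespace RandomBrouwer

variable {Ω : Type*} [MeasurableSpace Ω]

variable (μ : Measure Ω) (d : ℕ)

/-! ### Auxiliary lemmas -/

/-- Uniqueness of barycentric coefficients on a measurable set `B`. -/
lemma aux_coeff_unique_on {Ω : Type*} [MeasurableSpace Ω] (μ : Measure Ω) (d : ℕ)
    {n : ℕ} [NeZero n] (x : Fin n → L0 μ d) (hx : L0AffineIndep μ d x)
    (B : Set Ω) (hB : MeasurableSet B)
    (c c' : Fin n → Ω → ℝ) (hc : ∀ i, Measurable (c i)) (hc' : ∀ i, Measurable (c' i))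
    (hsum : ∀ ω, ∑ i, c i ω = 1) (hsum' : ∀ ω, ∑ i, c' i ω = 1)
    (heq : ∀ᵐ ω ∂μ, ω ∈ B → ∑ i, c i ω • x i ω = ∑ i, c' i ω • x i ω) :
    ∀ i, ∀ᵐ ω ∂μ, ω ∈ B → c i ω = c' i ω := by
  classical
  set ξ : Fin n → Ω → ℝ := fun i => B.indicator (fun ω => c i ω - c' i ω) with hξdef
  have hξm : ∀ i, Measurable (ξ i) := fun i => ((hc i).sub (hc' i)).indicator hB
  have hξsum : ∀ ω, ∑ i, ξ i ω = 0 := by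
    intro ω
    by_cases hωB : ω ∈ B
    · simp only [hξdef, Set.indicator_of_mem hωB, Finset.sum_sub_distrib, hsum, hsum', sub_self]
    · simp [hξdef, Set.indicator_of_notMem hωB]
  have hξ0 : ∀ᵐ ω ∂μ, ∑ i ∈ Finset.univ.erase (0 : Fin n), ξ i ω • (x i ω - x 0 ω) = 0 := by
    filter_upwards [heq] with ω hω
    by_cases hωB : ω ∈ B
    · have hfull : ∑ i, ξ i ω • (x i ω - x 0 ω) = 0 := by
        have e1 : ∑ i, ξ i ω • (x i ω - x 0 ω)
            = (∑ i, ξ i ω • x i ω) - (∑ i, ξ i ω) • x 0 ω := by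
          rw [Finset.sum_smul, ← Finset.sum_sub_distrib]
          exact Finset.sum_congr rfl fun i _ => smul_sub _ _ _
        have e2 : ∑ i, ξ i ω • x i ω = 0 := by
          have hterm : ∀ i, ξ i ω • x i ω = c i ω • x i ω - c' i ω • x i ω := by
            intro i
            simp [hξdef, Set.indicator_of_mem hωB, sub_smul]
          rw [Finset.sum_congr rfl fun i _ => hterm i, Finset.sum_sub_distrib, hω hωB, sub_self]
        rw [e1, e2, hξsum ω, zero_smul, sub_zero]
      calc ∑ i ∈ Finset.univ.erase (0 : Fin n), ξ i ω • (x i ω - x 0 ω)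
          = ∑ i, ξ i ω • (x i ω - x 0 ω) := Finset.sum_erase _ (by simp)
        _ = 0 := hfull
    · have hz : ∀ i, ξ i ω = 0 := fun i => Set.indicator_of_notMem hωB _
      simp [hz]
  have hzero : ∀ i, i ≠ (0 : Fin n) → ∀ᵐ ω ∂μ, ξ i ω = 0 := fun i hi => hx ξ hξm hξ0 i hi
  have hall : ∀ᵐ ω ∂μ, ∀ i, i ≠ (0 : Fin n) → ξ i ω = 0 := by
    rw [ae_all_iff]
    intro i
    by_cases hi : i = 0
    · simp [hi]
    · filter_upwards [hzero i hi] with ω hω _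
      exact hω
  intro i
  filter_upwards [hall] with ω hω hωB
  have hz : ξ i ω = 0 := by
    by_cases hi : i = 0
    · subst hi
      have h1 : ∑ j, ξ j ω = ξ 0 ω + ∑ j ∈ Finset.univ.erase (0 : Fin n), ξ j ω :=
        (Finset.add_sum_erase _ _ (Finset.mem_univ _)).symm
      have h2 : ∑ j ∈ Finset.univ.erase (0 : Fin n), ξ j ω = 0 :=
        Finset.sum_eq_zero fun j hj => hω j (Finset.ne_of_mem_erase hj)
      have h3 := hξsum ω
      rw [h1, h2, add_zero] at h3
      exact h3
    · exact hω i hi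
  simp only [hξdef, Set.indicator_of_mem hωB] at hz
  linarith

/-- Any measurable convex-coefficient family gives an element of the `L⁰`-convex hull. -/
lemma aux_mk_mem {Ω : Type*} [MeasurableSpace Ω] (μ : Measure Ω) (d : ℕ)
    {n : ℕ} [NeZero n] (x : Fin n → L0 μ d)
    (lam : Fin n → Ω → ℝ) (hm : ∀ i, Measurable (lam i))
    (hr : ∀ i ω, lam i ω ∈ Icc (0:ℝ) 1) (hs : ∀ ω, ∑ i, lam i ω = 1) :
    ∃ z : L0 μ d, z ∈ ConvL0 μ d x ∧ ∀ᵐ ω ∂μ, z ω = ∑ i, lam i ω • x i ω := by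
  have hmeas : AEStronglyMeasurable (fun ω => ∑ i, lam i ω • x i ω) μ :=
    Finset.aestronglyMeasurable_fun_sum _ fun i _ =>
      (hm i).aestronglyMeasurable.smul (x i).aestronglyMeasurable
  exact ⟨AEEqFun.mk _ hmeas, ⟨lam, hm, hr, hs, AEEqFun.coeFn_mk _ hmeas⟩,
    AEEqFun.coeFn_mk _ hmeas⟩

/-- The L⁰-extreme points of an L⁰-simplex are exactly the countable
(here: finite, along `n` pieces) concatenations of its vertices, i.e. the σ-stable hull
of the vertex set. -/
theorem extreme_points_of_L0_simplex {Ω : Type*} [MeasurableSpace Ω] (μ : Measure Ω)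
    [IsProbabilityMeasure μ] (d : ℕ) (hd : 0 < d) (n : ℕ) [NeZero n]
    (x : Fin n → L0 μ d) (hx : L0AffineIndep μ d x)
    (h : L0 μ d) (hh : h ∈ ConvL0 μ d x) :
    IsL0ExtremePoint μ d (ConvL0 μ d x) h ↔
      ∃ A : Fin n → Set Ω, IsFinPartition A ∧ ∀ i, ∀ᵐ ω ∂μ, ω ∈ A i → h ω = x i ω := by
  classical
  obtain ⟨lam, hlm, hlr, hls, hle⟩ := hh
  constructor
  · rintro ⟨-, hext⟩
    -- Step A: each coefficient is a.e. {0,1}-valued.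
    have stepA : ∀ i0 : Fin n, ∀ᵐ ω ∂μ, lam i0 ω = 0 ∨ lam i0 ω = 1 := by
      intro i0
      by_contra hcon
      set B : Set Ω := {ω | lam i0 ω ∈ Ioo (0:ℝ) 1} with hBdef
      have hBmeas : MeasurableSet B := (hlm i0) measurableSet_Ioo
      set α : Fin n → Ω → ℝ :=
        fun j ω => if ω ∈ B then (if j = i0 then 1 else 0) else lam j ω with hαdef
      set β : Fin n → Ω → ℝ :=
        fun j ω => if ω ∈ B then (if j = i0 then 0 else lam j ω / (1 - lam i0 ω))
          else lam j ω with hβdef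
      have hαm : ∀ j, Measurable (α j) :=
        fun j => Measurable.ite hBmeas measurable_const (hlm j)
      have hβm : ∀ j, Measurable (β j) := by
        intro j
        have hinner : Measurable fun ω => if j = i0 then (0:ℝ)
            else lam j ω / (1 - lam i0 ω) := by
          by_cases hj : j = i0
          · simp only [if_pos hj]; exact measurable_const
          · simp only [if_neg hj]; exact (hlm j).div (measurable_const.sub (hlm i0))
        exact Measurable.ite hBmeas hinner (hlm j)
      have hαr : ∀ j ω, α j ω ∈ Icc (0:ℝ) 1 := by
        intro j ω
        by_cases hωB : ω ∈ B
        · by_cases hj : j = i0 <;> simp [hαdef, hωB, hj]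
        · simpa [hαdef, hωB] using hlr j ω
      have hβr : ∀ j ω, β j ω ∈ Icc (0:ℝ) 1 := by
        intro j ω
        by_cases hωB : ω ∈ B
        · by_cases hj : j = i0
          · simp [hβdef, hωB, hj]
          · have hmem : lam i0 ω ∈ Ioo (0:ℝ) 1 := hωB
            have hpos : (0:ℝ) < 1 - lam i0 ω := by linarith [hmem.2]
            have hle1 : lam j ω + lam i0 ω ≤ 1 := by
              have hsub : ∑ k ∈ ({j, i0} : Finset (Fin n)), lam k ω ≤ ∑ k, lam k ω :=
                Finset.sum_le_sum_of_subset_of_nonneg (Finset.subset_univ _)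
                  (fun k _ _ => (hlr k ω).1)
              rwa [Finset.sum_pair hj, hls ω] at hsub
            constructor
            · simp only [hβdef, if_pos hωB, if_neg hj]
              exact div_nonneg (hlr j ω).1 hpos.le
            · simp only [hβdef, if_pos hωB, if_neg hj]
              exact (div_le_one hpos).2 (by linarith)
        · simpa [hβdef, hωB] using hlr j ω
      have hαs : ∀ ω, ∑ j, α j ω = 1 := by
        intro ω
        by_cases hωB : ω ∈ B
        · simp [hαdef, hωB]
        · simpa [hαdef, hωB] using hls ω
      have hβs : ∀ ω, ∑ j, β j ω = 1 := by
        intro ω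
        by_cases hωB : ω ∈ B
        · have hmem : lam i0 ω ∈ Ioo (0:ℝ) 1 := hωB
          have hne : (1:ℝ) - lam i0 ω ≠ 0 := by
            have := hmem.2; intro hc; linarith
          have hsub : ∑ j ∈ Finset.univ.erase i0, lam j ω = 1 - lam i0 ω := by
            have h4 := Finset.add_sum_erase Finset.univ (fun j => lam j ω) (Finset.mem_univ i0)
            rw [hls ω] at h4
            linarith
          calc ∑ j, β j ω
              = ∑ j ∈ Finset.univ.erase i0, β j ω :=
                (Finset.sum_erase _ (by simp [hβdef, hωB])).symm
            _ = ∑ j ∈ Finset.univ.erase i0, lam j ω / (1 - lam i0 ω) :=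
                Finset.sum_congr rfl fun j hj => by
                  simp [hβdef, hωB, Finset.ne_of_mem_erase hj]
            _ = (∑ j ∈ Finset.univ.erase i0, lam j ω) / (1 - lam i0 ω) :=
                (Finset.sum_div _ _ _).symm
            _ = 1 := by rw [hsub, div_self hne]
        · simpa [hβdef, hωB] using hls ω
      obtain ⟨y, hy, hye⟩ := aux_mk_mem μ d x α hαm hαr hαs
      obtain ⟨z, hz, hze⟩ := aux_mk_mem μ d x β hβm hβr hβs
      set ℓ : Ω → ℝ := fun ω => if ω ∈ B then lam i0 ω else (1/2 : ℝ) with hℓdef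
      have hℓm : Measurable ℓ := Measurable.ite hBmeas (hlm i0) measurable_const
      have hℓIoo : ∀ᵐ ω ∂μ, ℓ ω ∈ Ioo (0:ℝ) 1 := by
        refine ae_of_all μ fun ω => ?_
        by_cases hωB : ω ∈ B
        · simp only [hℓdef]
          rw [if_pos hωB]
          exact hωB
        · simp only [hℓdef]
          rw [if_neg hωB]
          constructor <;> norm_num
      have hmix : ∀ᵐ ω ∂μ, h ω = ℓ ω • y ω + (1 - ℓ ω) • z ω := by
        filter_upwards [hle, hye, hze] with ω hhω hyω hzω
        by_cases hωB : ω ∈ B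
        · have hmem : lam i0 ω ∈ Ioo (0:ℝ) 1 := hωB
          have hne : (1:ℝ) - lam i0 ω ≠ 0 := by
            have := hmem.2; intro hc; linarith
          rw [hhω, hyω, hzω]
          simp only [hℓdef, if_pos hωB]
          rw [Finset.smul_sum, Finset.smul_sum, ← Finset.sum_add_distrib]
          refine Finset.sum_congr rfl fun j _ => ?_
          by_cases hj : j = i0
          · subst hj
            simp [hαdef, hβdef, hωB, smul_smul]
          · simp only [hαdef, hβdef, if_pos hωB, if_neg hj, smul_smul, zero_smul, mul_zero,
              smul_zero, zero_add, mul_one]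
            congr 1
            rw [mul_comm, div_mul_cancel₀ _ hne]
        · simp only [hαdef, hβdef, if_neg hωB] at hyω hzω
          rw [hhω, hyω, hzω, ← add_smul]
          simp
      obtain ⟨hyh, -⟩ := hext y hy z hz ℓ hℓm hℓIoo hmix
      have hyhae : ∀ᵐ ω ∂μ, y ω = h ω := by
        rw [hyh]
        exact ae_of_all μ fun _ => rfl
      have heqB : ∀ᵐ ω ∂μ, ω ∈ B →
          ∑ j, (if j = i0 then (1:ℝ) else 0) • x j ω = ∑ j, lam j ω • x j ω := by
        filter_upwards [hye, hle, hyhae] with ω hyω hhω hyhω hωB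
        have hαval : ∀ j, α j ω = if j = i0 then (1:ℝ) else 0 := by
          intro j; simp [hαdef, hωB]
        calc ∑ j, (if j = i0 then (1:ℝ) else 0) • x j ω
            = ∑ j, α j ω • x j ω := Finset.sum_congr rfl fun j _ => by rw [hαval j]
          _ = y ω := hyω.symm
          _ = h ω := hyhω
          _ = ∑ j, lam j ω • x j ω := hhω
      have hcu := aux_coeff_unique_on μ d x hx B hBmeas
        (fun j ω => if j = i0 then (1:ℝ) else 0) lam
        (fun j => measurable_const) hlm (fun ω => by simp) hls heqB i0
      apply hcon
      filter_upwards [hcu] with ω hω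
      by_cases hωB : ω ∈ B
      · have h1 := hω hωB
        have hmem : lam i0 ω ∈ Ioo (0:ℝ) 1 := hωB
        simp only [if_pos rfl] at h1
        exact absurd h1.symm (ne_of_lt hmem.2)
      · have hmem : ¬ lam i0 ω ∈ Ioo (0:ℝ) 1 := hωB
        rcases (hlr i0 ω).1.eq_or_lt with h0 | h0
        · exact Or.inl h0.symm
        · right
          rcases (hlr i0 ω).2.lt_or_eq with h1 | h1
          · exact absurd ⟨h0, h1⟩ hmem
          · exact h1
    -- Step B: build the partition.
    have hzo : ∀ᵐ ω ∂μ, ∀ j, lam j ω = 0 ∨ lam j ω = 1 := ae_all_iff.2 stepA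
    set C : Fin n → Set Ω := fun i => {ω | lam i ω = 1 ∧ ∀ j, j < i → lam j ω ≠ 1} with hCdef
    set A : Fin n → Set Ω :=
      fun i => if i = 0 then {ω | ∀ j, j ≠ (0:Fin n) → ω ∉ C j} else C i with hAdef
    have hCmeas : ∀ i, MeasurableSet (C i) := by
      intro i
      have hCeq : C i = (lam i ⁻¹' {1}) ∩ ⋂ j, ⋂ (_ : j < i), (lam j ⁻¹' {1})ᶜ := by
        ext ω
        simp [hCdef, Set.mem_iInter]
      rw [hCeq]
      exact ((hlm i) (measurableSet_singleton 1)).inter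
        (MeasurableSet.iInter fun j => MeasurableSet.iInter fun _ =>
          ((hlm j) (measurableSet_singleton 1)).compl)
    have hAmeas : ∀ i, MeasurableSet (A i) := by
      intro i
      by_cases hi : i = 0
      · have hAeq : A i = ⋂ j, ⋂ (_ : j ≠ (0:Fin n)), (C j)ᶜ := by
          ext ω
          simp [hAdef, hi, Set.mem_iInter]
        rw [hAeq]
        exact MeasurableSet.iInter fun j => MeasurableSet.iInter fun _ => (hCmeas j).compl
      · simpa [hAdef, hi] using hCmeas i
    have hCd : ∀ i j, i ≠ j → ∀ ω, ω ∈ C i → ω ∈ C j → False := by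
      intro i j hij ω hωi hωj
      simp only [hCdef, Set.mem_setOf_eq] at hωi hωj
      rcases lt_trichotomy i j with hlt | heq' | hlt
      · exact hωj.2 i hlt hωi.1
      · exact hij heq'
      · exact hωi.2 j hlt hωj.1
    have hAdisj : Pairwise fun i j => Disjoint (A i) (A j) := by
      intro i j hij
      rw [Set.disjoint_left]
      intro ω hωi hωj
      by_cases hi : i = 0
      · have hj : j ≠ 0 := by rw [hi] at hij; exact hij.symm
        simp only [hAdef, hi, if_pos rfl, Set.mem_setOf_eq] at hωi
        simp only [hAdef, if_neg hj] at hωj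
        exact hωi j hj hωj
      · by_cases hj : j = 0
        · simp only [hAdef, hj, if_pos rfl, Set.mem_setOf_eq] at hωj
          simp only [hAdef, if_neg hi] at hωi
          exact hωj i hi hωi
        · simp only [hAdef, if_neg hi] at hωi
          simp only [hAdef, if_neg hj] at hωj
          exact hCd i j hij ω hωi hωj
    have hAuniv : (⋃ i, A i) = univ := by
      rw [Set.eq_univ_iff_forall]
      intro ω
      rw [Set.mem_iUnion]
      by_cases hex : ∃ j, j ≠ (0:Fin n) ∧ ω ∈ C j
      · obtain ⟨j, hj0, hjC⟩ := hex
        exact ⟨j, by simp only [hAdef, if_neg hj0]; exact hjC⟩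
      · push_neg at hex
        exact ⟨0, by simp only [hAdef, if_pos rfl, Set.mem_setOf_eq]; exact hex⟩
    refine ⟨A, ⟨hAmeas, hAdisj, hAuniv⟩, ?_⟩
    intro i
    filter_upwards [hle, hzo] with ω hhω hzoω hωA
    have key : ∀ k : Fin n, lam k ω = 1 → h ω = x k ω := by
      intro k hk
      have hz : ∀ j, j ≠ k → lam j ω = 0 := by
        intro j hj
        have h4 := Finset.add_sum_erase Finset.univ (fun m => lam m ω) (Finset.mem_univ k)
        simp only [hls ω] at h4
        rw [hk] at h4
        have hsum0 : ∑ m ∈ Finset.univ.erase k, lam m ω = 0 := by linarith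
        exact (Finset.sum_eq_zero_iff_of_nonneg (fun m _ => (hlr m ω).1)).1 hsum0 j
          (Finset.mem_erase.2 ⟨hj, Finset.mem_univ j⟩)
      rw [hhω, Finset.sum_eq_single k (fun j _ hj => by rw [hz j hj, zero_smul]) (by simp),
        hk, one_smul]
    by_cases hi : i = 0
    · subst hi
      simp only [hAdef, if_pos rfl, Set.mem_setOf_eq] at hωA
      have hex : ∃ j, lam j ω = 1 := by
        by_contra hne
        push_neg at hne
        have hzall : ∀ j, lam j ω = 0 := fun j => (hzoω j).resolve_right (hne j)
        have h5 := hls ω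
        rw [Finset.sum_eq_zero fun j _ => hzall j] at h5
        exact one_ne_zero h5.symm
      set S : Finset (Fin n) := Finset.univ.filter (fun j => lam j ω = 1) with hSdef
      have hSne : S.Nonempty := ⟨hex.choose, by simp [hSdef, hex.choose_spec]⟩
      obtain ⟨j, hjS, hjmin⟩ := S.exists_min_image id hSne
      have hj1 : lam j ω = 1 := (Finset.mem_filter.1 hjS).2
      have hjC : ω ∈ C j := by
        simp only [hCdef, Set.mem_setOf_eq]
        exact ⟨hj1, fun k hk hk1 =>
          absurd (hjmin k (by simp [hSdef, hk1])) (not_le.2 hk)⟩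
      have hj0 : j = 0 := by
        by_contra hj0
        exact hωA j hj0 hjC
      exact key 0 (hj0 ▸ hj1)
    · simp only [hAdef, if_neg hi] at hωA
      simp only [hCdef, Set.mem_setOf_eq] at hωA
      exact key i hωA.1
  · -- backward direction
    rintro ⟨A, ⟨hAmeas, hAdisj, hAuniv⟩, hAh⟩
    refine ⟨⟨lam, hlm, hlr, hls, hle⟩, ?_⟩
    intro y hy z hz ℓ hℓm hℓIoo hmix
    obtain ⟨a, ham, har, has, hae⟩ := hy
    obtain ⟨b, hbm, hbr, hbs, hbe⟩ := hz
    set γ : Fin n → Ω → ℝ := fun j ω => ℓ ω * a j ω + (1 - ℓ ω) * b j ω with hγdef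
    have hγm : ∀ j, Measurable (γ j) :=
      fun j => (hℓm.mul (ham j)).add ((measurable_const.sub hℓm).mul (hbm j))
    have hγs : ∀ ω, ∑ j, γ j ω = 1 := by
      intro ω
      simp only [hγdef]
      rw [Finset.sum_add_distrib, ← Finset.mul_sum, ← Finset.mul_sum, has ω, hbs ω]
      ring
    have hγe : ∀ᵐ ω ∂μ, h ω = ∑ j, γ j ω • x j ω := by
      filter_upwards [hmix, hae, hbe] with ω hm2 ha2 hb2
      rw [hm2, ha2, hb2, Finset.smul_sum, Finset.smul_sum, ← Finset.sum_add_distrib]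
      exact Finset.sum_congr rfl fun j _ => by rw [smul_smul, smul_smul, ← add_smul]
    -- per-piece claims
    have claimy : ∀ i, ∀ᵐ ω ∂μ, ω ∈ A i → y ω = h ω := by
      intro i
      have heqA : ∀ᵐ ω ∂μ, ω ∈ A i →
          ∑ j, (if j = i then (1:ℝ) else 0) • x j ω = ∑ j, γ j ω • x j ω := by
        filter_upwards [hAh i, hγe] with ω hA2 hγ2 hωA
        have hδ : ∑ j, (if j = i then (1:ℝ) else 0) • x j ω = x i ω := by
          rw [Finset.sum_eq_single i (fun j _ hj => by rw [if_neg hj, zero_smul]) (by simp)]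
          rw [if_pos rfl, one_smul]
        rw [hδ, ← hA2 hωA, hγ2]
      have hcu := aux_coeff_unique_on μ d x hx (A i) (hAmeas i)
        (fun j ω => if j = i then (1:ℝ) else 0) γ
        (fun j => measurable_const) hγm (fun ω => by simp) hγs heqA
      have hcuall : ∀ᵐ ω ∂μ, ∀ j, ω ∈ A i → (if j = i then (1:ℝ) else 0) = γ j ω :=
        ae_all_iff.2 hcu
      filter_upwards [hae, hAh i, hℓIoo, hcuall] with ω ha2 hA2 hℓ2 hγ2 hωA
      have ha0 : ∀ j, j ≠ i → a j ω = 0 := by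
        intro j hj
        have h6 := (hγ2 j hωA).symm
        rw [if_neg hj] at h6
        have h7 : 0 ≤ ℓ ω * a j ω := mul_nonneg hℓ2.1.le (har j ω).1
        have h8 : 0 ≤ (1 - ℓ ω) * b j ω := mul_nonneg (by linarith [hℓ2.2]) (hbr j ω).1
        have h9 : ℓ ω * a j ω = 0 := by
          simp only [hγdef] at h6
          linarith
        exact (mul_eq_zero.1 h9).resolve_left (ne_of_gt hℓ2.1)
      have hai : a i ω = 1 := by
        have h10 := has ω
        rw [Finset.sum_eq_single i (fun j _ hj => ha0 j hj) (by simp)] at h10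
        exact h10
      rw [ha2, Finset.sum_eq_single i (fun j _ hj => by rw [ha0 j hj, zero_smul]) (by simp),
        hai, one_smul, hA2 hωA]
    have claimz : ∀ i, ∀ᵐ ω ∂μ, ω ∈ A i → z ω = h ω := by
      intro i
      have heqA : ∀ᵐ ω ∂μ, ω ∈ A i →
          ∑ j, (if j = i then (1:ℝ) else 0) • x j ω = ∑ j, γ j ω • x j ω := by
        filter_upwards [hAh i, hγe] with ω hA2 hγ2 hωA
        have hδ : ∑ j, (if j = i then (1:ℝ) else 0) • x j ω = x i ω := by
          rw [Finset.sum_eq_single i (fun j _ hj => by rw [if_neg hj, zero_smul]) (by simp)]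
          rw [if_pos rfl, one_smul]
        rw [hδ, ← hA2 hωA, hγ2]
      have hcu := aux_coeff_unique_on μ d x hx (A i) (hAmeas i)
        (fun j ω => if j = i then (1:ℝ) else 0) γ
        (fun j => measurable_const) hγm (fun ω => by simp) hγs heqA
      have hcuall : ∀ᵐ ω ∂μ, ∀ j, ω ∈ A i → (if j = i then (1:ℝ) else 0) = γ j ω :=
        ae_all_iff.2 hcu
      filter_upwards [hbe, hAh i, hℓIoo, hcuall] with ω hb2 hA2 hℓ2 hγ2 hωA
      have hb0 : ∀ j, j ≠ i → b j ω = 0 := by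
        intro j hj
        have h6 := (hγ2 j hωA).symm
        rw [if_neg hj] at h6
        have h7 : 0 ≤ ℓ ω * a j ω := mul_nonneg hℓ2.1.le (har j ω).1
        have h8 : 0 ≤ (1 - ℓ ω) * b j ω := mul_nonneg (by linarith [hℓ2.2]) (hbr j ω).1
        have h9 : (1 - ℓ ω) * b j ω = 0 := by
          simp only [hγdef] at h6
          linarith
        exact (mul_eq_zero.1 h9).resolve_left (by intro hc; nlinarith [hℓ2.2])
      have hbi : b i ω = 1 := by
        have h10 := hbs ω
        rw [Finset.sum_eq_single i (fun j _ hj => hb0 j hj) (by simp)] at h10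
        exact h10
      rw [hb2, Finset.sum_eq_single i (fun j _ hj => by rw [hb0 j hj, zero_smul]) (by simp),
        hbi, one_smul, hA2 hωA]
    constructor
    · apply AEEqFun.ext
      have hally := ae_all_iff.2 claimy
      filter_upwards [hally] with ω hω
      have hωU : ω ∈ ⋃ i, A i := by rw [hAuniv]; trivial
      obtain ⟨i, hi⟩ := Set.mem_iUnion.1 hωU
      exact hω i hi
    · apply AEEqFun.ext
      have hallz := ae_all_iff.2 claimz
      filter_upwards [hallz] with ω hω
      have hωU : ω ∈ ⋃ i, A i := by rw [hAuniv]; trivial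
      obtain ⟨i, hi⟩ := Set.mem_iUnion.1 hωU
      exact hω i hi
end RandomBrouwer
end
end

section
/- Diameter bound for the L⁰-barycentric subdivision: Let x_1,…,x_n ∈ L⁰(𝓕,ℝ^d) be L⁰-affinely independent and S = Conv_{L⁰}{x_1,…,x_n}. For a permutation π of {1,…,n}, set y_k^π = (1/k)∑_{i=1}^k x_{π(i)} (k = 1,…,n) and S_π = Conv_{L⁰}{y_1^π,…,y_n^π}. Then for every permutation π and all u, v ∈ S_π, one has |u⁰(ω) − v⁰(ω)| ≤ ((n−1)/n) · max_{1≤i,j≤n} |x_i⁰(ω) − x_j⁰(ω)| for a.e. ω ∈ Ω. Moreover, for any L⁰-simplex G = Conv_{L⁰}{y_1,…,y_m} and any u, v ∈ G, |u⁰(ω) − v⁰(ω)| ≤ max_{1≤k,l≤m} |y_k⁰(ω) − y_l⁰(ω)| for a.e. ω (so the random diameter of G equals the a.e. maximum of pairwise vertex distances). -/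
open MeasureTheory Filter Set Topology

noncomputable section

namespace RandomBrouwer

variable {Ω : Type*} [MeasurableSpace Ω]

variable (μ : Measure Ω) (d : ℕ)

lemma norm_sum_smul_le' {E : Type*} [NormedAddCommGroup E] [NormedSpace ℝ E]
    {ι : Type*} (s : Finset ι) (w : ι → ℝ) (b : ι → E) (M : ℝ)
    (hw : ∀ i ∈ s, 0 ≤ w i) (hb : ∀ i ∈ s, ‖b i‖ ≤ M) :
    ‖∑ i ∈ s, w i • b i‖ ≤ (∑ i ∈ s, w i) * M := by
  calc ‖∑ i ∈ s, w i • b i‖ ≤ ∑ i ∈ s, ‖w i • b i‖ := norm_sum_le _ _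
    _ ≤ ∑ i ∈ s, w i * M := by
        refine Finset.sum_le_sum fun i hi => ?_
        rw [norm_smul, Real.norm_of_nonneg (hw i hi)]
        exact mul_le_mul_of_nonneg_left (hb i hi) (hw i hi)
    _ = (∑ i ∈ s, w i) * M := by rw [Finset.sum_mul]

lemma conv_pair_dist {E : Type*} [NormedAddCommGroup E] [NormedSpace ℝ E]
    {ι : Type*} [Fintype ι] (lam mu : ι → ℝ) (a : ι → E) (M : ℝ)
    (hlam0 : ∀ i, 0 ≤ lam i) (hlam1 : ∑ i, lam i = 1)
    (hmu0 : ∀ i, 0 ≤ mu i) (hmu1 : ∑ i, mu i = 1)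
    (hM : ∀ i j, ‖a i - a j‖ ≤ M) :
    ‖∑ i, lam i • a i - ∑ j, mu j • a j‖ ≤ M := by
  set v := ∑ j, mu j • a j with hv
  have hpv : ∀ p : E, p - v = ∑ j, mu j • (p - a j) := by
    intro p
    simp only [smul_sub, Finset.sum_sub_distrib, ← Finset.sum_smul, hmu1, one_smul, hv]
  have hav : ∀ i, ‖a i - v‖ ≤ M := by
    intro i
    rw [hpv (a i)]
    have := norm_sum_smul_le' Finset.univ mu (fun j => a i - a j) M
      (fun j _ => hmu0 j) (fun j _ => hM i j)
    simpa [hmu1] using this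
  have huv : ∑ i, lam i • a i - v = ∑ i, lam i • (a i - v) := by
    simp only [smul_sub, Finset.sum_sub_distrib, ← Finset.sum_smul, hlam1, one_smul]
  rw [huv]
  have := norm_sum_smul_le' Finset.univ lam (fun i => a i - v) M
    (fun i _ => hlam0 i) (fun i _ => hav i)
  simpa [hlam1] using this

lemma bary_pair_dist_aux {E : Type*} [NormedAddCommGroup E] [NormedSpace ℝ E]
    {n : ℕ} [NeZero n] (a : Fin n → E) (M : ℝ)
    (hM : ∀ i j, ‖a i - a j‖ ≤ M) (k l : Fin n) (hkl : k ≤ l) :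
    ‖(((l : ℕ) + 1 : ℝ))⁻¹ • ∑ i ∈ Finset.univ.filter (fun i => i ≤ l), a i -
     (((k : ℕ) + 1 : ℝ))⁻¹ • ∑ i ∈ Finset.univ.filter (fun i => i ≤ k), a i‖
     ≤ ((n : ℝ) - 1) / n * M := by
  have hM0 : 0 ≤ M := le_trans (by simp) (hM k k)
  have hfilt : ∀ j : Fin n, Finset.univ.filter (fun i => i ≤ j) = Finset.Iic j := by
    intro j; ext i; simp
  have hcard : ∀ j : Fin n, (Finset.univ.filter (fun i => i ≤ j)).card = (j : ℕ) + 1 := by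
    intro j; rw [hfilt, Fin.card_Iic]
  set Sk := Finset.univ.filter (fun i => i ≤ k) with hSk
  set Sl := Finset.univ.filter (fun i => i ≤ l) with hSl
  have hsub : Sk ⊆ Sl := by
    intro i hi
    simp only [hSk, hSl, Finset.mem_filter, Finset.mem_univ, true_and] at hi ⊢
    exact le_trans hi hkl
  set ck : ℝ := ((k : ℕ) + 1 : ℝ) with hck
  set cl : ℝ := ((l : ℕ) + 1 : ℝ) with hcl
  have hck0 : 0 < ck := by positivity
  have hcl0 : 0 < cl := by positivity
  set bk : E := ck⁻¹ • ∑ i ∈ Sk, a i with hbk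
  set bl : E := cl⁻¹ • ∑ i ∈ Sl, a i with hbl
  have hsumk : (∑ _j ∈ Sk, ck⁻¹) = 1 := by
    rw [Finset.sum_const, nsmul_eq_mul, hcard k]
    push_cast [hck]; field_simp
  have hsuml : (∑ _j ∈ Sl, cl⁻¹) = 1 := by
    rw [Finset.sum_const, nsmul_eq_mul, hcard l]
    push_cast [hcl]; field_simp
  -- each vertex is within M of bk
  have hav : ∀ i : Fin n, ‖a i - bk‖ ≤ M := by
    intro i
    have heq : ∑ j ∈ Sk, ck⁻¹ • (a i - a j) = a i - bk := by
      calc ∑ j ∈ Sk, ck⁻¹ • (a i - a j)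
          = (∑ _j ∈ Sk, ck⁻¹ • a i) - ∑ j ∈ Sk, ck⁻¹ • a j := by
            simp only [smul_sub, Finset.sum_sub_distrib]
        _ = (∑ _j ∈ Sk, ck⁻¹) • a i - ck⁻¹ • ∑ j ∈ Sk, a j := by
            rw [Finset.sum_smul, Finset.smul_sum]
        _ = a i - bk := by rw [hsumk, one_smul, hbk]
    rw [← heq]
    have := norm_sum_smul_le' Sk (fun _ => ck⁻¹) (fun j => a i - a j) M
      (fun j _ => by positivity) (fun j _ => hM i j)
    rw [hsumk, one_mul] at this
    exact this
  -- ∑ over Sk of (a i - bk) is 0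
  have hzero : ∑ i ∈ Sk, (a i - bk) = 0 := by
    have : (∑ _i ∈ Sk, bk) = ∑ i ∈ Sk, a i := by
      calc (∑ _i ∈ Sk, bk) = ∑ _i ∈ Sk, ck⁻¹ • ∑ j ∈ Sk, a j := by rw [hbk]
        _ = (∑ _i ∈ Sk, ck⁻¹) • ∑ j ∈ Sk, a j := (Finset.sum_smul).symm
        _ = ∑ j ∈ Sk, a j := by rw [hsumk, one_smul]
    rw [Finset.sum_sub_distrib, this, sub_self]
  have hdiff : bl - bk = cl⁻¹ • ∑ i ∈ Sl \ Sk, (a i - bk) := by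
    have h1 : ∑ i ∈ Sl, (a i - bk) = ∑ i ∈ Sl \ Sk, (a i - bk) := by
      rw [← Finset.sum_sdiff hsub, hzero, add_zero]
    calc bl - bk = cl⁻¹ • ∑ i ∈ Sl, a i - (∑ _i ∈ Sl, cl⁻¹) • bk := by
          rw [hsuml, one_smul, hbl]
      _ = cl⁻¹ • ∑ i ∈ Sl, a i - cl⁻¹ • ∑ _i ∈ Sl, bk := by
          congr 1
          rw [Finset.sum_smul, Finset.smul_sum]
      _ = cl⁻¹ • ((∑ i ∈ Sl, a i) - ∑ _i ∈ Sl, bk) := by rw [smul_sub]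
      _ = cl⁻¹ • ∑ i ∈ Sl, (a i - bk) := by rw [Finset.sum_sub_distrib]
      _ = cl⁻¹ • ∑ i ∈ Sl \ Sk, (a i - bk) := by rw [h1]
  have hcardsd : ((Sl \ Sk).card : ℝ) ≤ (l : ℕ) := by
    rw [Finset.card_sdiff_of_subset hsub, hcard l, hcard k]
    have : (l : ℕ) + 1 - ((k : ℕ) + 1) ≤ (l : ℕ) := by omega
    exact_mod_cast this
  have hnorm : ‖bl - bk‖ ≤ cl⁻¹ * (((Sl \ Sk).card : ℝ) * M) := by
    rw [hdiff, norm_smul, Real.norm_of_nonneg (le_of_lt (inv_pos.2 hcl0))]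
    refine mul_le_mul_of_nonneg_left ?_ (le_of_lt (inv_pos.2 hcl0))
    calc ‖∑ i ∈ Sl \ Sk, (a i - bk)‖ ≤ ∑ i ∈ Sl \ Sk, ‖a i - bk‖ := norm_sum_le _ _
      _ ≤ ∑ _i ∈ Sl \ Sk, M := Finset.sum_le_sum fun i _ => hav i
      _ = ((Sl \ Sk).card : ℝ) * M := by rw [Finset.sum_const, nsmul_eq_mul]
  refine hnorm.trans ?_
  have hln : ((l : ℕ) : ℝ) + 1 ≤ (n : ℝ) := by exact_mod_cast l.isLt
  have hn0 : (0 : ℝ) < n := by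
    have := Nat.pos_of_ne_zero (NeZero.ne n); exact_mod_cast this
  have hfrac : cl⁻¹ * ((Sl \ Sk).card : ℝ) ≤ ((n : ℝ) - 1) / n := by
    rw [inv_mul_eq_div, div_le_div_iff₀ hcl0 hn0, hcl]
    nlinarith [hcardsd, hln, (Nat.cast_nonneg (Sl \ Sk).card : (0:ℝ) ≤ _)]
  calc cl⁻¹ * (((Sl \ Sk).card : ℝ) * M) = (cl⁻¹ * ((Sl \ Sk).card : ℝ)) * M := by ring
    _ ≤ ((n : ℝ) - 1) / n * M := mul_le_mul_of_nonneg_right hfrac hM0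

lemma bary_pair_dist {E : Type*} [NormedAddCommGroup E] [NormedSpace ℝ E]
    {n : ℕ} [NeZero n] (a : Fin n → E) (M : ℝ)
    (hM : ∀ i j, ‖a i - a j‖ ≤ M) (k l : Fin n) :
    ‖(((k : ℕ) + 1 : ℝ))⁻¹ • ∑ i ∈ Finset.univ.filter (fun i => i ≤ k), a i -
     (((l : ℕ) + 1 : ℝ))⁻¹ • ∑ i ∈ Finset.univ.filter (fun i => i ≤ l), a i‖
     ≤ ((n : ℝ) - 1) / n * M := by
  rcases le_total k l with h | h
  · rw [norm_sub_rev]; exact bary_pair_dist_aux a M hM k l h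
  · exact bary_pair_dist_aux a M hM l k h

lemma aeeqfun_coeFn_finset_sum {Ω : Type*} [MeasurableSpace Ω] (μ : Measure Ω)
    {δ : Type*} [NormedAddCommGroup δ] {ι : Type*} (s : Finset ι) (f : ι → Ω →ₘ[μ] δ) :
    ⇑(∑ i ∈ s, f i) =ᵐ[μ] fun ω => ∑ i ∈ s, f i ω := by
  classical
  induction s using Finset.induction_on with
  | empty =>
    simp only [Finset.sum_empty]
    exact MeasureTheory.AEEqFun.coeFn_zero (β := δ)
  | insert j t hnew ih =>
    rw [Finset.sum_insert hnew]
    filter_upwards [MeasureTheory.AEEqFun.coeFn_add (f j) (∑ i ∈ t, f i), ih] with ω h1 h2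
    rw [h1, Finset.sum_insert hnew]
    simp [h2]

/-- Diameter bound for the L⁰-barycentric subdivision, together with the
fact that on any L⁰-simplex the pointwise distance of two points is a.e. bounded by the
maximum of the pairwise vertex distances. -/
theorem barycentric_subdivision_diameter {Ω : Type*} [MeasurableSpace Ω] (μ : Measure Ω)
    [IsProbabilityMeasure μ] (d : ℕ) (hd : 0 < d) (n : ℕ) [NeZero n]
    (x : Fin n → L0 μ d) (hx : L0AffineIndep μ d x) :
    (∀ π : Equiv.Perm (Fin n),
      ∀ u ∈ ConvL0 μ d (fun k : Fin n =>
        (((k : ℕ) + 1 : ℝ))⁻¹ • ∑ i ∈ Finset.univ.filter (fun i => i ≤ k), x (π i)),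
      ∀ v ∈ ConvL0 μ d (fun k : Fin n =>
        (((k : ℕ) + 1 : ℝ))⁻¹ • ∑ i ∈ Finset.univ.filter (fun i => i ≤ k), x (π i)),
      ∀ᵐ ω ∂μ, ‖u ω - v ω‖ ≤ (((n : ℝ) - 1) / n) *
        Finset.univ.sup' ⟨((0 : Fin n), (0 : Fin n)), Finset.mem_univ _⟩
          (fun p : Fin n × Fin n => ‖x p.1 ω - x p.2 ω‖)) ∧
    (∀ (m : ℕ) [NeZero m], ∀ y : Fin m → L0 μ d, L0AffineIndep μ d y →
      ∀ u ∈ ConvL0 μ d y, ∀ v ∈ ConvL0 μ d y,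
      ∀ᵐ ω ∂μ, ‖u ω - v ω‖ ≤
        Finset.univ.sup' ⟨((0 : Fin m), (0 : Fin m)), Finset.mem_univ _⟩
          (fun p : Fin m × Fin m => ‖y p.1 ω - y p.2 ω‖)) := by
  constructor
  · -- barycentric subdivision bound
    intro π u hu v hv
    set z : Fin n → L0 μ d := fun k : Fin n =>
      (((k : ℕ) + 1 : ℝ))⁻¹ • ∑ i ∈ Finset.univ.filter (fun i => i ≤ k), x (π i) with hzdef
    obtain ⟨lam, _, hlam01, hlam1, hlamu⟩ := hu
    obtain ⟨mu, _, hmu01, hmu1, hmuv⟩ := hv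
    have hz : ∀ᵐ ω ∂μ, ∀ k : Fin n, (z k) ω =
        (((k : ℕ) + 1 : ℝ))⁻¹ • ∑ i ∈ Finset.univ.filter (fun i => i ≤ k), x (π i) ω := by
      rw [MeasureTheory.ae_all_iff]
      intro k
      filter_upwards [MeasureTheory.AEEqFun.coeFn_smul ((((k : ℕ) + 1 : ℝ))⁻¹)
          (∑ i ∈ Finset.univ.filter (fun i => i ≤ k), x (π i)),
        aeeqfun_coeFn_finset_sum μ (Finset.univ.filter (fun i => i ≤ k))
          (fun i => x (π i))] with ω h1 h2
      rw [hzdef]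
      simp only []
      rw [h1]
      simp only [Pi.smul_apply, h2]
    filter_upwards [hlamu, hmuv, hz] with ω h1 h2 h3
    set M : ℝ := Finset.univ.sup' ⟨((0 : Fin n), (0 : Fin n)), Finset.mem_univ _⟩
      (fun p : Fin n × Fin n => ‖x p.1 ω - x p.2 ω‖) with hMdef
    have hMx : ∀ i j : Fin n, ‖x (π i) ω - x (π j) ω‖ ≤ M :=
      fun i j => Finset.le_sup' (fun p : Fin n × Fin n => ‖x p.1 ω - x p.2 ω‖)
        (Finset.mem_univ (π i, π j))
    have h1' : u ω = ∑ k, lam k ω •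
        ((((k : ℕ) + 1 : ℝ))⁻¹ • ∑ i ∈ Finset.univ.filter (fun i => i ≤ k), x (π i) ω) :=
      h1.trans (Finset.sum_congr rfl fun k _ => by rw [h3 k])
    have h2' : v ω = ∑ k, mu k ω •
        ((((k : ℕ) + 1 : ℝ))⁻¹ • ∑ i ∈ Finset.univ.filter (fun i => i ≤ k), x (π i) ω) :=
      h2.trans (Finset.sum_congr rfl fun k _ => by rw [h3 k])
    rw [h1', h2']
    exact conv_pair_dist (fun k => lam k ω) (fun k => mu k ω) _ _
      (fun k => (hlam01 k ω).1) (hlam1 ω) (fun k => (hmu01 k ω).1) (hmu1 ω)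
      (fun k l => bary_pair_dist (fun i => x (π i) ω) M hMx k l)
  · -- diameter of a general simplex
    intro m _ y _ u hu v hv
    obtain ⟨lam, _, hlam01, hlam1, hlamu⟩ := hu
    obtain ⟨mu, _, hmu01, hmu1, hmuv⟩ := hv
    filter_upwards [hlamu, hmuv] with ω h1 h2
    rw [h1, h2]
    exact conv_pair_dist (fun k => lam k ω) (fun k => mu k ω) (fun k => y k ω) _
      (fun k => (hlam01 k ω).1) (hlam1 ω) (fun k => (hmu01 k ω).1) (hmu1 ω)
      (fun i j => Finset.le_sup' (fun p : Fin m × Fin m => ‖y p.1 ω - y p.2 ω‖)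
        (Finset.mem_univ (i, j)))
end RandomBrouwer
end
end

section
/- Existence of a proper L⁰-labeling function adapted to a σ-stable self-map: Let S = Conv_{L⁰}{x_1,…,x_n} be an (n−1)-dimensional L⁰-simplex in L⁰(𝓕,ℝ^d) and f : S → S a σ-stable map. For x ∈ S, let (λ_1^x,…,λ_n^x) and (μ_1^x,…,μ_n^x) be the unique L⁰-barycentric coordinates of x and f(x), i.e., x = ∑_i λ_i^x x_i and f(x) = ∑_i μ_i^x x_i. Then there exists a σ-stable map φ : S → L⁰(𝓕,{1,…,n}) such that for every x ∈ S and every i ∈ {1,…,n}: P( {ω : φ(x)⁰(ω) = i} ∩ ( {ω : (λ_i^x)⁰(ω) = 0} ∪ {ω : (λ_i^x)⁰(ω) < (μ_i^x)⁰(ω)} ) ) = 0. -/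
open MeasureTheory Filter Set Topology

noncomputable section

namespace RandomBrouwer

variable {Ω : Type*} [MeasurableSpace Ω]

variable (μ : Measure Ω) (d : ℕ)

/-! ### Auxiliary machinery for the labeling construction -/

open Classical in
/-- The selection predicate: index `m` is "good" for coordinates `lam`, `mu` at `ω`. -/
def goodPred {Ω' : Type*} {n : ℕ} (lam mu : Fin n → Ω' → ℝ) (ω : Ω') (m : ℕ) : Prop :=
  (∃ h : m < n, 0 < lam ⟨m, h⟩ ω ∧ mu ⟨m, h⟩ ω ≤ lam ⟨m, h⟩ ω) ∨ m = n

lemma goodPred_exists {Ω' : Type*} {n : ℕ} (lam mu : Fin n → Ω' → ℝ) (ω : Ω') :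
    ∃ m, goodPred lam mu ω m := ⟨n, Or.inr rfl⟩

open Classical in
/-- The label: one plus the least good index. -/
noncomputable def labelOf {Ω' : Type*} {n : ℕ} (lam mu : Fin n → Ω' → ℝ) (ω : Ω') : ℕ :=
  Nat.find (goodPred_exists lam mu ω) + 1

open Classical in
lemma labelOf_measurable {Ω' : Type*} [MeasurableSpace Ω'] {n : ℕ}
    (lam mu : Fin n → Ω' → ℝ) (hl : ∀ i, Measurable (lam i)) (hm : ∀ i, Measurable (mu i)) :
    Measurable (labelOf lam mu) := by
  have : Measurable fun ω => Nat.find (goodPred_exists lam mu ω) := by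
    refine measurable_find _ fun k => ?_
    by_cases hk : k < n
    · have : {ω | goodPred lam mu ω k}
          = {ω | 0 < lam ⟨k, hk⟩ ω ∧ mu ⟨k, hk⟩ ω ≤ lam ⟨k, hk⟩ ω} := by
        ext ω
        simp only [goodPred, mem_setOf_eq]
        constructor
        · rintro (⟨h, hp⟩ | rfl)
          · exact hp
          · exact absurd hk (lt_irrefl _)
        · intro h; exact Or.inl ⟨hk, h⟩
      rw [this]
      exact (measurableSet_lt measurable_const (hl _)).inter
        (measurableSet_le (hm _) (hl _))
    · by_cases hkn : k = n
      · have : {ω | goodPred lam mu ω k} = univ := by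
          ext ω; simp [goodPred, hkn]
        rw [this]; exact MeasurableSet.univ
      · have : {ω | goodPred lam mu ω k} = ∅ := by
          ext ω
          simp only [goodPred, mem_setOf_eq, mem_empty_iff_false, iff_false]
          rintro (⟨h, _⟩ | h) <;> [exact hk h; exact hkn h]
        rw [this]; exact MeasurableSet.empty
  exact this.add_const 1

open Classical in
lemma labelOf_congr {Ω' : Type*} {n : ℕ} (lam mu lam' mu' : Fin n → Ω' → ℝ) (ω ω' : Ω')
    (h1 : ∀ i, lam i ω = lam' i ω') (h2 : ∀ i, mu i ω = mu' i ω') :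
    labelOf lam mu ω = labelOf lam' mu' ω' := by
  unfold labelOf
  have hiff : ∀ m, goodPred lam mu ω m ↔ goodPred lam' mu' ω' m := by
    intro m
    constructor
    · rintro (⟨h, hp⟩ | rfl)
      · exact Or.inl ⟨h, by rw [← h1, ← h2]; exact hp⟩
      · exact Or.inr rfl
    · rintro (⟨h, hp⟩ | rfl)
      · exact Or.inl ⟨h, by rw [h1, h2]; exact hp⟩
      · exact Or.inr rfl
  have hle : Nat.find (goodPred_exists lam mu ω) ≤ Nat.find (goodPred_exists lam' mu' ω') :=
    Nat.find_le ((hiff _).2 (Nat.find_spec (goodPred_exists lam' mu' ω')))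
  have hge : Nat.find (goodPred_exists lam' mu' ω') ≤ Nat.find (goodPred_exists lam mu ω) :=
    Nat.find_le ((hiff _).1 (Nat.find_spec (goodPred_exists lam mu ω)))
  omega

/-- Arithmetic: two probability vectors admit a good index. -/
lemma exists_good_index {n : ℕ} [NeZero n] (a b : Fin n → ℝ)
    (ha : ∀ i, 0 ≤ a i) (hb : ∀ i, 0 ≤ b i)
    (hsa : ∑ i, a i = 1) (hsb : ∑ i, b i = 1) :
    ∃ i, 0 < a i ∧ b i ≤ a i := by
  by_contra h
  push_neg at h
  have hle : ∀ i, a i ≤ b i := by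
    intro i
    rcases lt_or_eq_of_le (ha i) with h0 | h0
    · exact (h i h0).le
    · rw [← h0]; exact hb i
  have heq : ∀ i ∈ Finset.univ, a i = b i :=
    (Finset.sum_eq_sum_iff_of_le fun i _ => hle i).1 (hsa.trans hsb.symm)
  have hpos : ∃ i, 0 < a i := by
    by_contra h2
    push_neg at h2
    have : ∑ i, a i ≤ 0 := Finset.sum_nonpos fun i _ => h2 i
    linarith
  obtain ⟨i, hi⟩ := hpos
  have h3 := h i hi
  rw [heq i (Finset.mem_univ i)] at h3
  exact lt_irrefl _ h3

open Classical in
lemma labelOf_spec {Ω' : Type*} {n : ℕ} [NeZero n] (lam mu : Fin n → Ω' → ℝ) (ω : Ω')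
    (hex : ∃ i : Fin n, 0 < lam i ω ∧ mu i ω ≤ lam i ω) :
    labelOf lam mu ω ≤ n ∧
      ∀ i : Fin n, labelOf lam mu ω = (i : ℕ) + 1 → 0 < lam i ω ∧ mu i ω ≤ lam i ω := by
  obtain ⟨i0, hi0⟩ := hex
  have hgood : goodPred lam mu ω i0.val := Or.inl ⟨i0.isLt, by simpa using hi0⟩
  have hfind_le : Nat.find (goodPred_exists lam mu ω) ≤ i0.val := Nat.find_le hgood
  constructor
  · have : (i0 : ℕ) < n := i0.isLt
    unfold labelOf
    omega
  · intro i hi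
    have hf : Nat.find (goodPred_exists lam mu ω) = (i : ℕ) := by
      unfold labelOf at hi; omega
    have hspec := Nat.find_spec (goodPred_exists lam mu ω)
    rw [hf] at hspec
    rcases hspec with ⟨h, hp⟩ | h
    · simpa using hp
    · exact absurd h (Nat.ne_of_lt i.isLt)

open Classical in
/-- Chosen barycentric coordinates of an element of the L⁰-convex hull. -/
noncomputable def coordsOf (μ : Measure Ω) (d n : ℕ) [NeZero n] (x : Fin n → L0 μ d)
    (z : L0 μ d) : Fin n → Ω → ℝ :=
  if hz : z ∈ ConvL0 μ d x then hz.choose else fun i _ => if i = (0 : Fin n) then 1 else 0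

open Classical in
lemma coordsOf_measurable (μ : Measure Ω) (d n : ℕ) [NeZero n] (x : Fin n → L0 μ d)
    (z : L0 μ d) (i : Fin n) : Measurable (coordsOf μ d n x z i) := by
  unfold coordsOf
  split_ifs with hz
  · exact hz.choose_spec.1 i
  · exact measurable_const

open Classical in
lemma coordsOf_mem_Icc (μ : Measure Ω) (d n : ℕ) [NeZero n] (x : Fin n → L0 μ d)
    (z : L0 μ d) (i : Fin n) (ω : Ω) : coordsOf μ d n x z i ω ∈ Icc (0:ℝ) 1 := by
  unfold coordsOf
  split_ifs with hz
  · exact hz.choose_spec.2.1 i ω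
  · dsimp only
    split_ifs <;> norm_num

open Classical in
lemma coordsOf_sum (μ : Measure Ω) (d n : ℕ) [NeZero n] (x : Fin n → L0 μ d)
    (z : L0 μ d) (ω : Ω) : ∑ i, coordsOf μ d n x z i ω = 1 := by
  unfold coordsOf
  split_ifs with hz
  · exact hz.choose_spec.2.2.1 ω
  · simp

open Classical in
lemma coordsOf_spec {μ : Measure Ω} {d n : ℕ} [NeZero n] {x : Fin n → L0 μ d}
    {z : L0 μ d} (hz : z ∈ ConvL0 μ d x) :
    ∀ᵐ ω ∂μ, z ω = ∑ i, coordsOf μ d n x z i ω • x i ω := by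
  unfold coordsOf
  rw [dif_pos hz]
  exact hz.choose_spec.2.2.2

/-- Local uniqueness of barycentric coordinates of an L⁰-affinely independent family. -/
lemma coords_unique {μ : Measure Ω} {d n : ℕ} [NeZero n] {x : Fin n → L0 μ d}
    (hx : L0AffineIndep μ d x) {A : Set Ω} (hA : MeasurableSet A)
    {lam lam' : Fin n → Ω → ℝ} (hm : ∀ i, Measurable (lam i)) (hm' : ∀ i, Measurable (lam' i))
    (hs : ∀ ω, ∑ i, lam i ω = 1) (hs' : ∀ ω, ∑ i, lam' i ω = 1)
    (heq : ∀ᵐ ω ∂μ, ω ∈ A → ∑ i, lam i ω • x i ω = ∑ i, lam' i ω • x i ω) :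
    ∀ᵐ ω ∂μ, ω ∈ A → ∀ i, lam i ω = lam' i ω := by
  set ξ : Fin n → Ω → ℝ := fun i => A.indicator (fun ω => lam i ω - lam' i ω) with hξ
  have hξm : ∀ i, Measurable (ξ i) := fun i => ((hm i).sub (hm' i)).indicator hA
  have h0 : ∀ᵐ ω ∂μ, ∑ i ∈ Finset.univ.erase (0 : Fin n), ξ i ω • (x i ω - x 0 ω) = 0 := by
    filter_upwards [heq] with ω hω
    by_cases hmem : ω ∈ A
    · have hind : ∀ i, ξ i ω = lam i ω - lam' i ω := fun i =>
        Set.indicator_of_mem hmem _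
      set c : Fin n → ℝ := fun i => lam i ω - lam' i ω with hc
      have hsum0 : ∑ i, c i = 0 := by
        simp only [hc, Finset.sum_sub_distrib, hs ω, hs' ω, sub_self]
      have hsumx : ∑ i, c i • x i ω = 0 := by
        simp only [hc, sub_smul, Finset.sum_sub_distrib, hω hmem, sub_self]
      have herase : ∑ i ∈ Finset.univ.erase (0 : Fin n), c i = -c 0 := by
        have h := Finset.add_sum_erase Finset.univ c (Finset.mem_univ (0 : Fin n))
        rw [hsum0] at h
        linarith
      calc ∑ i ∈ Finset.univ.erase (0 : Fin n), ξ i ω • (x i ω - x 0 ω)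
          = ∑ i ∈ Finset.univ.erase (0 : Fin n), c i • (x i ω - x 0 ω) := by
            refine Finset.sum_congr rfl fun i _ => by rw [hind i]
        _ = (∑ i ∈ Finset.univ.erase (0 : Fin n), c i • x i ω)
              - (∑ i ∈ Finset.univ.erase (0 : Fin n), c i) • x 0 ω := by
            simp only [smul_sub, Finset.sum_sub_distrib, Finset.sum_smul]
        _ = (∑ i, c i • x i ω - c 0 • x 0 ω) - (-c 0) • x 0 ω := by
            rw [herase]
            congr 1
            have := Finset.add_sum_erase Finset.univ (fun i => c i • x i ω)
              (Finset.mem_univ (0 : Fin n))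
            rw [← this]
            abel
        _ = 0 := by rw [hsumx, neg_smul]; abel
    · have : ∀ i, ξ i ω = 0 := fun i => Set.indicator_of_notMem hmem _
      simp [this]
  have hzero := hx ξ hξm h0
  have hall : ∀ᵐ ω ∂μ, ∀ i, i ≠ (0 : Fin n) → ξ i ω = 0 := by
    rw [ae_all_iff]
    intro i
    by_cases hi : i = (0 : Fin n)
    · filter_upwards with ω h; exact absurd hi h
    · filter_upwards [hzero i hi] with ω h _; exact h
  filter_upwards [hall] with ω hω hmem
  have hne : ∀ i, i ≠ (0 : Fin n) → lam i ω = lam' i ω := by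
    intro i hi
    have := hω i hi
    rw [hξ] at this
    simp only [Set.indicator_of_mem hmem] at this
    linarith
  intro i
  by_cases hi : i = (0 : Fin n)
  · subst hi
    have h1 := Finset.add_sum_erase Finset.univ (fun i => lam i ω) (Finset.mem_univ (0 : Fin n))
    have h2 := Finset.add_sum_erase Finset.univ (fun i => lam' i ω) (Finset.mem_univ (0 : Fin n))
    have h3 : ∑ i ∈ Finset.univ.erase (0 : Fin n), lam i ω
        = ∑ i ∈ Finset.univ.erase (0 : Fin n), lam' i ω :=
      Finset.sum_congr rfl fun i hi => hne i (Finset.ne_of_mem_erase hi)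
    rw [hs ω] at h1
    rw [hs' ω] at h2
    linarith
  · exact hne i hi

/-- Existence of a proper L⁰-labeling function adapted to a σ-stable
self-map of an L⁰-simplex. -/
theorem exists_adapted_proper_L0_labeling {Ω : Type*} [MeasurableSpace Ω] (μ : Measure Ω)
    [IsProbabilityMeasure μ] (d : ℕ) (hd : 0 < d) (n : ℕ) [NeZero n]
    (x : Fin n → L0 μ d) (hx : L0AffineIndep μ d x)
    (f : L0 μ d → L0 μ d) (hmaps : Set.MapsTo f (ConvL0 μ d x) (ConvL0 μ d x))
    (hstabf : SigmaStableMapOn μ d (ConvL0 μ d x) f) :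
    ∃ φ : L0 μ d → (Ω →ₘ[μ] ℕ),
      SigmaStableMapOn μ d (ConvL0 μ d x) φ ∧
      (∀ y ∈ ConvL0 μ d x, ∀ᵐ ω ∂μ, 1 ≤ φ y ω ∧ φ y ω ≤ n) ∧
      ∀ z ∈ ConvL0 μ d x,
        ∀ lam : Fin n → Ω → ℝ, (∀ i, Measurable (lam i)) →
          (∀ i ω, lam i ω ∈ Icc (0:ℝ) 1) → (∀ ω, ∑ i, lam i ω = 1) →
          (∀ᵐ ω ∂μ, z ω = ∑ i, lam i ω • x i ω) →
        ∀ mu : Fin n → Ω → ℝ, (∀ i, Measurable (mu i)) →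
          (∀ i ω, mu i ω ∈ Icc (0:ℝ) 1) → (∀ ω, ∑ i, mu i ω = 1) →
          (∀ᵐ ω ∂μ, f z ω = ∑ i, mu i ω • x i ω) →
        ∀ i : Fin n, ∀ᵐ ω ∂μ,
          ¬(φ z ω = (i : ℕ) + 1 ∧ (lam i ω = 0 ∨ lam i ω < mu i ω)) := by
  classical
  set lamC : L0 μ d → Fin n → Ω → ℝ := fun z => coordsOf μ d n x z with hlamC
  set muC : L0 μ d → Fin n → Ω → ℝ := fun z => coordsOf μ d n x (f z) with hmuC
  set lbl : L0 μ d → Ω → ℕ := fun z => labelOf (lamC z) (muC z) with hlbl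
  have hlblm : ∀ z, Measurable (lbl z) := fun z =>
    labelOf_measurable _ _ (fun i => coordsOf_measurable μ d n x z i)
      (fun i => coordsOf_measurable μ d n x (f z) i)
  have hex : ∀ (z : L0 μ d) (ω : Ω), ∃ i : Fin n, 0 < lamC z i ω ∧ muC z i ω ≤ lamC z i ω := by
    intro z ω
    exact exists_good_index (fun i => lamC z i ω) (fun i => muC z i ω)
      (fun i => (coordsOf_mem_Icc μ d n x z i ω).1)
      (fun i => (coordsOf_mem_Icc μ d n x (f z) i ω).1)
      (coordsOf_sum μ d n x z ω) (coordsOf_sum μ d n x (f z) ω)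
  refine ⟨fun z => AEEqFun.mk (lbl z) (hlblm z).aestronglyMeasurable, ?_, ?_, ?_⟩
  · -- σ-stability of φ
    intro A hA v hv z hz hconc k
    have hzk := hconc k
    have hfzk := hstabf A hA v hv z hz hconc k
    have heq1 : ∀ᵐ ω ∂μ, ω ∈ A k →
        ∑ i, lamC z i ω • x i ω = ∑ i, lamC (v k) i ω • x i ω := by
      filter_upwards [coordsOf_spec hz, coordsOf_spec (hv k), hzk] with ω h1 h2 h3 hmem
      rw [← h1, ← h2, h3 hmem]
    have heq2 : ∀ᵐ ω ∂μ, ω ∈ A k →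
        ∑ i, muC z i ω • x i ω = ∑ i, muC (v k) i ω • x i ω := by
      filter_upwards [coordsOf_spec (hmaps hz), coordsOf_spec (hmaps (hv k)), hfzk]
        with ω h1 h2 h3 hmem
      rw [← h1, ← h2, h3 hmem]
    have u1 := coords_unique hx (hA.1 k)
      (fun i => coordsOf_measurable μ d n x z i) (fun i => coordsOf_measurable μ d n x (v k) i)
      (coordsOf_sum μ d n x z) (coordsOf_sum μ d n x (v k)) heq1
    have u2 := coords_unique hx (hA.1 k)
      (fun i => coordsOf_measurable μ d n x (f z) i)
      (fun i => coordsOf_measurable μ d n x (f (v k)) i)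
      (coordsOf_sum μ d n x (f z)) (coordsOf_sum μ d n x (f (v k))) heq2
    filter_upwards [AEEqFun.coeFn_mk (lbl z) (hlblm z).aestronglyMeasurable,
      AEEqFun.coeFn_mk (lbl (v k)) (hlblm (v k)).aestronglyMeasurable, u1, u2]
      with ω e1 e2 h1 h2 hmem
    rw [e1, e2]
    exact labelOf_congr _ _ _ _ ω ω (h1 hmem) (h2 hmem)
  · -- Bounds on φ
    intro y hy
    filter_upwards [AEEqFun.coeFn_mk (lbl y) (hlblm y).aestronglyMeasurable] with ω e
    rw [e]
    have hspec := labelOf_spec (lamC y) (muC y) ω (hex y ω)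
    exact ⟨Nat.le_add_left 1 _, hspec.1⟩
  · -- Adaptedness
    intro z hz lam hlm hlI hls hlr mu hmm hmI hms hmr i
    have heq1 : ∀ᵐ ω ∂μ, ω ∈ (univ : Set Ω) →
        ∑ j, lam j ω • x j ω = ∑ j, lamC z j ω • x j ω := by
      filter_upwards [hlr, coordsOf_spec hz] with ω h1 h2 _
      rw [← h1, ← h2]
    have heq2 : ∀ᵐ ω ∂μ, ω ∈ (univ : Set Ω) →
        ∑ j, mu j ω • x j ω = ∑ j, muC z j ω • x j ω := by
      filter_upwards [hmr, coordsOf_spec (hmaps hz)] with ω h1 h2 _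
      rw [← h1, ← h2]
    have u1 := coords_unique hx MeasurableSet.univ hlm
      (fun j => coordsOf_measurable μ d n x z j) hls (coordsOf_sum μ d n x z) heq1
    have u2 := coords_unique hx MeasurableSet.univ hmm
      (fun j => coordsOf_measurable μ d n x (f z) j) hms (coordsOf_sum μ d n x (f z)) heq2
    filter_upwards [AEEqFun.coeFn_mk (lbl z) (hlblm z).aestronglyMeasurable, u1, u2]
      with ω e h1 h2
    rintro ⟨hφ, hbad⟩
    rw [e] at hφ
    have hgood := (labelOf_spec (lamC z) (muC z) ω (hex z ω)).2 i hφ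
    have hl1 : lam i ω = lamC z i ω := h1 (mem_univ ω) i
    have hl2 : mu i ω = muC z i ω := h2 (mem_univ ω) i
    rcases hbad with h0 | hlt
    · rw [hl1] at h0; linarith [hgood.1]
    · rw [hl1, hl2] at hlt; linarith [hgood.2]
end RandomBrouwer
end
end

section
/- Random projection onto a closed L⁰-convex set in L⁰(𝓕,ℝ^d): Let G be a nonempty, 𝒯_{ε,λ}-closed, L⁰-convex subset of L⁰(𝓕,ℝ^d). Then for every x ∈ L⁰(𝓕,ℝ^d) there exists a unique P_G(x) ∈ G such that |x⁰(ω) − (P_G(x))⁰(ω)| ≤ |x⁰(ω) − g⁰(ω)| for a.e. ω, for every g ∈ G (i.e., P_G(x) attains the essential infimum of the random distances from x to G). Moreover, the resulting map P_G : L⁰(𝓕,ℝ^d) → G is nonexpansive: |(P_G(x))⁰(ω) − (P_G(y))⁰(ω)| ≤ |x⁰(ω) − y⁰(ω)| for a.e. ω, for all x, y ∈ L⁰(𝓕,ℝ^d). -/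
open MeasureTheory Filter Set Topology

noncomputable section

namespace RandomBrouwer

variable {Ω : Type*} [MeasurableSpace Ω]

variable (μ : Measure Ω) (d : ℕ)

open scoped InnerProductSpace

variable {ν : Measure Ω} {k : ℕ}

def phi (t : ℝ) : ℝ := t / (1 + t)

lemma phi_mono {a b : ℝ} (ha : 0 ≤ a) (hab : a ≤ b) : phi a ≤ phi b := by
  unfold phi; rw [div_le_div_iff₀ (by linarith) (by linarith)]; nlinarith

lemma phi_strict {a b : ℝ} (ha : 0 ≤ a) (hab : a < b) : phi a < phi b := by
  unfold phi; rw [div_lt_div_iff₀ (by linarith) (by linarith)]; nlinarith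

lemma phi_nonneg {t : ℝ} (ht : 0 ≤ t) : 0 ≤ phi t := div_nonneg ht (by linarith)

lemma phi_le_one {t : ℝ} (ht : 0 ≤ t) : phi t ≤ 1 := by
  unfold phi; rw [div_le_one (by linarith)]; linarith

lemma phi_meas : Measurable phi := measurable_id.div (measurable_const.add measurable_id)

lemma phi_norm_le_one {t : ℝ} (ht : 0 ≤ t) : ‖phi t‖ ≤ 1 := by
  rw [Real.norm_eq_abs, abs_of_nonneg (phi_nonneg ht)]; exact phi_le_one ht

lemma phi_tendsto {u : ℕ → ℝ} {t : ℝ} (ht : 0 ≤ t) (h : Tendsto u atTop (𝓝 t)) :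
    Tendsto (fun n => phi (u n)) atTop (𝓝 (phi t)) := by
  have hc : ContinuousAt phi t := by
    apply ContinuousAt.div continuousAt_id (continuousAt_const.add continuousAt_id)
    intro h0; simp only [Pi.add_apply, id] at h0; linarith
  exact hc.tendsto.comp h

lemma integrable_phi [IsProbabilityMeasure ν] {F : Ω → ℝ} (hF : Measurable F)
    (h0 : ∀ ω, 0 ≤ F ω) : Integrable (fun ω => phi (F ω)) ν :=
  ⟨(phi_meas.comp hF).aestronglyMeasurable,
    HasFiniteIntegral.of_bounded (C := 1) (Eventually.of_forall fun ω => phi_norm_le_one (h0 ω))⟩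

lemma one_div_tendsto : Tendsto (fun n : ℕ => 1/((n:ℝ)+1)) atTop (𝓝 0) :=
  tendsto_one_div_add_atTop_nhds_zero_nat

open Classical in
def paste (u v : L0 ν k) (S : Set Ω) (hS : MeasurableSet S) : L0 ν k :=
  AEEqFun.mk (S.piecewise ⇑u ⇑v)
    (u.stronglyMeasurable.piecewise hS v.stronglyMeasurable).aestronglyMeasurable

lemma paste_coe (u v : L0 ν k) (S : Set Ω) (hS : MeasurableSet S) :
    ∀ᵐ ω ∂ν, (ω ∈ S → paste u v S hS ω = u ω) ∧ (ω ∉ S → paste u v S hS ω = v ω) := by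
  filter_upwards [AEEqFun.coeFn_mk _ ((u.stronglyMeasurable.piecewise hS
    v.stronglyMeasurable).aestronglyMeasurable)] with ω hω
  constructor <;> intro h
  · rw [show paste u v S hS ω = _ from hω]; simp only [Set.piecewise]; rw [if_pos h]
  · rw [show paste u v S hS ω = _ from hω]; simp only [Set.piecewise]; rw [if_neg h]

lemma paste_mem {G : Set (L0 ν k)} (hconv : L0Convex ν k G) {u v : L0 ν k}
    (hu : u ∈ G) (hv : v ∈ G) (S : Set Ω) (hS : MeasurableSet S) :
    paste u v S hS ∈ G := by
  refine hconv u hu v hv (S.indicator fun _ => (1:ℝ)) (measurable_const.indicator hS)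
    (fun ω => ?_) _ ?_
  · by_cases h : ω ∈ S <;> simp [h]
  · filter_upwards [paste_coe u v S hS] with ω hω
    by_cases h : ω ∈ S
    · simp [hω.1 h, Set.indicator_of_mem h]
    · simp [hω.2 h, Set.indicator_of_notMem h]

lemma par_law (x u v : Ed k) :
    ‖u - v‖^2 = 2*‖x-u‖^2 + 2*‖x-v‖^2 - 4*‖x - (2⁻¹:ℝ)•(u+v)‖^2 := by
  have h := parallelogram_law_with_norm ℝ (x-u) (x-v)
  have h2 : x - (2⁻¹:ℝ)•(u+v) = (2⁻¹:ℝ) • ((x-u)+(x-v)) := by module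
  have h3 : ‖x - (2⁻¹:ℝ)•(u+v)‖ = 2⁻¹ * ‖(x-u)+(x-v)‖ := by
    rw [h2, norm_smul]; norm_num
  have h4 : (x-u) - (x-v) = v - u := by abel
  rw [h4] at h
  rw [norm_sub_rev u v, h3]
  nlinarith [h]

lemma exists_min [IsProbabilityMeasure ν] (G : Set (L0 ν k)) (hne : G.Nonempty)
    (hcl : TelClosed ν k G) (hconv : L0Convex ν k G) (x : L0 ν k) :
    ∃ p ∈ G, ∀ g ∈ G, ∀ᵐ ω ∂ν, ‖x ω - p ω‖ ≤ ‖x ω - g ω‖ := by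
  classical
  have hFmeas : ∀ g : L0 ν k, Measurable (fun ω => ‖x ω - g ω‖) :=
    fun g => (x.measurable.sub g.measurable).norm
  have hint : ∀ g : L0 ν k, Integrable (fun ω => phi ‖x ω - g ω‖) ν :=
    fun g => integrable_phi (hFmeas g) (fun ω => norm_nonneg _)
  set Φ : L0 ν k → ℝ := fun g => ∫ ω, phi ‖x ω - g ω‖ ∂ν with hΦdef
  have hbdd : BddBelow (Φ '' G) := by
    refine ⟨0, ?_⟩; rintro _ ⟨g, hg, rfl⟩
    exact integral_nonneg fun ω => phi_nonneg (norm_nonneg _)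
  have hcle : ∀ g ∈ G, sInf (Φ '' G) ≤ Φ g := fun g hg => csInf_le hbdd ⟨g, hg, rfl⟩
  set c := sInf (Φ '' G) with hcdef
  have hex : ∀ n : ℕ, ∃ g, g ∈ G ∧ Φ g < c + 1/((n:ℝ)+1) := by
    intro n
    have hpos : (0:ℝ) < 1/((n:ℝ)+1) := by positivity
    obtain ⟨y, hy, hylt⟩ := exists_lt_of_csInf_lt (hne.image Φ) (by linarith : c < c + 1/((n:ℝ)+1))
    obtain ⟨g, hg, rfl⟩ := hy
    exact ⟨g, hg, hylt⟩
  choose g' hg'G hg'lt using hex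
  let g : ℕ → L0 ν k := fun n => Nat.rec (g' 0) (fun n p =>
    paste p (g' (n+1)) {ω | ‖x ω - p ω‖ ≤ ‖x ω - g' (n+1) ω‖}
      (measurableSet_le (hFmeas p) (hFmeas (g' (n+1))))) n
  have hgG : ∀ n, g n ∈ G := by
    intro n; induction n with
    | zero => exact hg'G 0
    | succ n ih => exact paste_mem hconv ih (hg'G (n+1)) _ _
  have hminall : ∀ᵐ ω ∂ν, ∀ n,
      ‖x ω - g (n+1) ω‖ = min ‖x ω - g n ω‖ ‖x ω - g' (n+1) ω‖ := by
    rw [ae_all_iff]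
    intro n
    filter_upwards [paste_coe (g n) (g' (n+1)) {ω | ‖x ω - g n ω‖ ≤ ‖x ω - g' (n+1) ω‖}
      (measurableSet_le (hFmeas (g n)) (hFmeas (g' (n+1))))] with ω hω
    by_cases h : ‖x ω - g n ω‖ ≤ ‖x ω - g' (n+1) ω‖
    · have e : g (n+1) ω = g n ω := hω.1 h
      rw [e, min_eq_left h]
    · have e : g (n+1) ω = g' (n+1) ω := hω.2 h
      rw [e, min_eq_right (le_of_lt (lt_of_not_ge h))]
  set η : Ω → ℝ := fun ω => ⨅ n, ‖x ω - g n ω‖ with hηdef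
  have hηmeas : Measurable η := Measurable.iInf (fun n => hFmeas (g n))
  have hη0 : ∀ ω, 0 ≤ η ω := fun ω => Real.iInf_nonneg (fun n => norm_nonneg _)
  have hbddb : ∀ ω, BddBelow (Set.range fun n : ℕ => ‖x ω - g n ω‖) := by
    intro ω; refine ⟨0, ?_⟩; rintro _ ⟨n, rfl⟩; exact norm_nonneg _
  have hηle : ∀ ω n, η ω ≤ ‖x ω - g n ω‖ := fun ω n => ciInf_le (hbddb ω) n
  -- pointwise consequences
  have hanti : ∀ ω, (∀ n, ‖x ω - g (n+1) ω‖ = min ‖x ω - g n ω‖ ‖x ω - g' (n+1) ω‖) →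
      Antitone fun n => ‖x ω - g n ω‖ := by
    intro ω hω
    refine antitone_nat_of_succ_le fun n => ?_
    rw [hω n]; exact min_le_left _ _
  have htend : ∀ ω, (∀ n, ‖x ω - g (n+1) ω‖ = min ‖x ω - g n ω‖ ‖x ω - g' (n+1) ω‖) →
      Tendsto (fun n => ‖x ω - g n ω‖) atTop (𝓝 (η ω)) := by
    intro ω hω
    exact tendsto_atTop_ciInf (hanti ω hω) (hbddb ω)
  have hle' : ∀ ω, (∀ n, ‖x ω - g (n+1) ω‖ = min ‖x ω - g n ω‖ ‖x ω - g' (n+1) ω‖) →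
      ∀ n, ‖x ω - g n ω‖ ≤ ‖x ω - g' n ω‖ := by
    intro ω hω n
    cases n with
    | zero => exact le_of_eq rfl
    | succ n => rw [hω n]; exact min_le_right _ _
  -- integral facts
  have hIub : ∀ n, Φ (g n) ≤ c + 1/((n:ℝ)+1) := by
    intro n
    have h1 : Φ (g n) ≤ Φ (g' n) := by
      refine integral_mono_ae (hint (g n)) (hint (g' n)) ?_
      filter_upwards [hminall] with ω hω
      exact phi_mono (norm_nonneg _) (hle' ω hω n)
    linarith [hg'lt n]
  have hIc : ∀ n, c ≤ Φ (g n) := fun n => hcle _ (hgG n)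
  have hctend : Tendsto (fun n : ℕ => c + 1/((n:ℝ)+1)) atTop (𝓝 c) := by
    simpa using tendsto_const_nhds.add one_div_tendsto
  have hItend : Tendsto (fun n => Φ (g n)) atTop (𝓝 (∫ ω, phi (η ω) ∂ν)) := by
    refine tendsto_integral_of_dominated_convergence (fun _ => (1:ℝ))
      (fun n => ((phi_meas.comp (hFmeas (g n))).aestronglyMeasurable))
      (integrable_const 1)
      (fun n => Eventually.of_forall fun ω => phi_norm_le_one (norm_nonneg _)) ?_
    filter_upwards [hminall] with ω hω
    exact phi_tendsto (hη0 ω) (htend ω hω)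
  have hIeta : ∫ ω, phi (η ω) ∂ν = c := by
    have hsq : Tendsto (fun n => Φ (g n)) atTop (𝓝 c) :=
      tendsto_of_tendsto_of_tendsto_of_le_of_le tendsto_const_nhds hctend hIc hIub
    exact tendsto_nhds_unique hItend hsq
  have hηint : Integrable (fun ω => phi (η ω)) ν := integrable_phi hηmeas hη0
  -- the claim: eta is a.e. below the distance to any element of G
  have hclaim : ∀ q ∈ G, ∀ᵐ ω ∂ν, η ω ≤ ‖x ω - q ω‖ := by
    intro q hq
    set A := {ω | ‖x ω - q ω‖ < η ω} with hAdef
    have hA : MeasurableSet A := measurableSet_lt (hFmeas q) hηmeas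
    have hJn : ∀ n, c ≤ ∫ ω, (if ω ∈ A then phi ‖x ω - q ω‖ else phi ‖x ω - g n ω‖) ∂ν := by
      intro n
      have hmem : paste q (g n) A hA ∈ G := paste_mem hconv hq (hgG n) A hA
      have heq : ∫ ω, phi ‖x ω - paste q (g n) A hA ω‖ ∂ν
          = ∫ ω, (if ω ∈ A then phi ‖x ω - q ω‖ else phi ‖x ω - g n ω‖) ∂ν := by
        refine integral_congr_ae ?_
        filter_upwards [paste_coe q (g n) A hA] with ω hω
        by_cases h : ω ∈ A
        · rw [hω.1 h, if_pos h]
        · rw [hω.2 h, if_neg h]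
      have h2 : c ≤ ∫ ω, phi ‖x ω - paste q (g n) A hA ω‖ ∂ν := hcle _ hmem
      rw [heq] at h2; exact h2
    have hJtend : Tendsto (fun n => ∫ ω, (if ω ∈ A then phi ‖x ω - q ω‖ else phi ‖x ω - g n ω‖) ∂ν)
        atTop (𝓝 (∫ ω, (if ω ∈ A then phi ‖x ω - q ω‖ else phi (η ω)) ∂ν)) := by
      refine tendsto_integral_of_dominated_convergence (fun _ => (1:ℝ))
        (fun n => ?_) (integrable_const 1)
        (fun n => Eventually.of_forall fun ω => ?_) ?_
      · exact (Measurable.ite hA (phi_meas.comp (hFmeas q))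
          (phi_meas.comp (hFmeas (g n)))).aestronglyMeasurable
      · by_cases h : ω ∈ A
        · rw [if_pos h]; exact phi_norm_le_one (norm_nonneg _)
        · rw [if_neg h]; exact phi_norm_le_one (norm_nonneg _)
      · filter_upwards [hminall] with ω hω
        by_cases h : ω ∈ A
        · simp only [if_pos h]; exact tendsto_const_nhds
        · simp only [if_neg h]; exact phi_tendsto (hη0 ω) (htend ω hω)
    have hJge : c ≤ ∫ ω, (if ω ∈ A then phi ‖x ω - q ω‖ else phi (η ω)) ∂ν :=
      ge_of_tendsto' hJtend hJn
    have hJint : Integrable (fun ω => (if ω ∈ A then phi ‖x ω - q ω‖ else phi (η ω))) ν := by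
      refine ⟨(Measurable.ite hA (phi_meas.comp (hFmeas q)) (phi_meas.comp hηmeas)).aestronglyMeasurable,
        HasFiniteIntegral.of_bounded (C := 1) (Eventually.of_forall fun ω => ?_)⟩
      by_cases h : ω ∈ A
      · rw [if_pos h]; exact phi_norm_le_one (norm_nonneg _)
      · rw [if_neg h]; exact phi_norm_le_one (hη0 ω)
    -- psi = phi(eta) - integrand is nonneg with nonpositive integral
    have hpsi_eq : ∀ ω, phi (η ω) - (if ω ∈ A then phi ‖x ω - q ω‖ else phi (η ω))
        = A.indicator (fun ω => phi (η ω) - phi ‖x ω - q ω‖) ω := by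
      intro ω; by_cases h : ω ∈ A
      · rw [if_pos h, Set.indicator_of_mem h]
      · rw [if_neg h, Set.indicator_of_notMem h]; ring
    have hpsi_nonneg : ∀ ω, 0 ≤ A.indicator (fun ω => phi (η ω) - phi ‖x ω - q ω‖) ω := by
      intro ω; by_cases h : ω ∈ A
      · rw [Set.indicator_of_mem h]
        have hlt : ‖x ω - q ω‖ < η ω := h
        linarith [phi_strict (norm_nonneg (x ω - q ω)) hlt]
      · rw [Set.indicator_of_notMem h]
    have hpsi_int : Integrable (A.indicator (fun ω => phi (η ω) - phi ‖x ω - q ω‖)) ν := by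
      have := (hηint.sub (hint q)).indicator hA
      exact this
    have hpsi_le : ∫ ω, A.indicator (fun ω => phi (η ω) - phi ‖x ω - q ω‖) ω ∂ν ≤ 0 := by
      have h1 : ∫ ω, (phi (η ω) - (if ω ∈ A then phi ‖x ω - q ω‖ else phi (η ω))) ∂ν
          = (∫ ω, phi (η ω) ∂ν) - ∫ ω, (if ω ∈ A then phi ‖x ω - q ω‖ else phi (η ω)) ∂ν :=
        integral_sub hηint hJint
      have h2 : ∫ ω, (phi (η ω) - (if ω ∈ A then phi ‖x ω - q ω‖ else phi (η ω))) ∂ν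
          = ∫ ω, A.indicator (fun ω => phi (η ω) - phi ‖x ω - q ω‖) ω ∂ν :=
        integral_congr_ae (Eventually.of_forall hpsi_eq)
      rw [← h2, h1, hIeta]; linarith
    have hpsi_zero : (A.indicator (fun ω => phi (η ω) - phi ‖x ω - q ω‖)) =ᵐ[ν] 0 := by
      refine (integral_eq_zero_iff_of_nonneg_ae (Eventually.of_forall hpsi_nonneg) hpsi_int).mp ?_
      exact le_antisymm hpsi_le (integral_nonneg hpsi_nonneg)
    filter_upwards [hpsi_zero] with ω hω
    by_contra hcon
    have hmem : ω ∈ A := lt_of_not_ge hcon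
    rw [Set.indicator_of_mem hmem] at hω
    have := phi_strict (norm_nonneg (x ω - q ω)) (show ‖x ω - q ω‖ < η ω from hmem)
    simp only [Pi.zero_apply] at hω
    linarith
  -- midpoints
  have hmid : ∀ n j : ℕ, ∃ m : L0 ν k, m ∈ G ∧
      ∀ᵐ ω ∂ν, m ω = (2⁻¹:ℝ) • (g n ω + g j ω) := by
    intro n j
    have hsm : AEStronglyMeasurable (fun ω => (2⁻¹:ℝ) • (g n ω + g j ω)) ν :=
      (((g n).stronglyMeasurable.add (g j).stronglyMeasurable).const_smul
        (2⁻¹:ℝ)).aestronglyMeasurable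
    refine ⟨AEEqFun.mk _ hsm, ?_, AEEqFun.coeFn_mk _ hsm⟩
    refine hconv (g n) (hgG n) (g j) (hgG j) (fun _ => (2⁻¹:ℝ)) measurable_const
      (fun ω => by norm_num) _ ?_
    filter_upwards [AEEqFun.coeFn_mk _ hsm] with ω hω
    rw [hω, smul_add]
    norm_num
  choose m hmG hmcoe using hmid
  have hmdist : ∀ᵐ ω ∂ν, ∀ n j : ℕ, η ω ≤ ‖x ω - (2⁻¹:ℝ) • (g n ω + g j ω)‖ := by
    rw [ae_all_iff]; intro n; rw [ae_all_iff]; intro j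
    filter_upwards [hclaim (m n j) (hmG n j), hmcoe n j] with ω h1 h2
    rw [← h2]; exact h1
  -- a.e. pointwise Cauchy and convergence
  have hcauchy : ∀ᵐ ω ∂ν, ∃ l : Ed k, Tendsto (fun n => g n ω) atTop (𝓝 l) := by
    filter_upwards [hminall, hmdist] with ω hω hmω
    have hkey : ∀ n j : ℕ, n ≤ j → ‖g n ω - g j ω‖^2 ≤ 4*(‖x ω - g n ω‖^2 - η ω^2) := by
      intro n j hnk
      have hpar := par_law (x ω) (g n ω) (g j ω)
      have h1 : η ω ≤ ‖x ω - (2⁻¹:ℝ) • (g n ω + g j ω)‖ := hmω n j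
      have h2 : ‖x ω - g j ω‖ ≤ ‖x ω - g n ω‖ := hanti ω hω hnk
      have h3 : η ω ^ 2 ≤ ‖x ω - (2⁻¹:ℝ) • (g n ω + g j ω)‖^2 :=
        pow_le_pow_left₀ (hη0 ω) h1 2
      have h4 : ‖x ω - g j ω‖^2 ≤ ‖x ω - g n ω‖^2 :=
        pow_le_pow_left₀ (norm_nonneg _) h2 2
      linarith
    have h0 : Tendsto (fun n => 4*(‖x ω - g n ω‖^2 - η ω^2)) atTop (𝓝 0) := by
      have := (((htend ω hω).pow 2).sub (tendsto_const_nhds (x := η ω ^ 2))).const_mul (4:ℝ)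
      simpa using this
    have hcs : CauchySeq (fun n => g n ω) := by
      rw [Metric.cauchySeq_iff']
      intro ε hε
      have hev : ∀ᶠ N in atTop, 4*(‖x ω - g N ω‖^2 - η ω^2) < ε^2 :=
        h0.eventually (gt_mem_nhds (by positivity))
      obtain ⟨N, hN⟩ := hev.exists
      refine ⟨N, fun n hn => ?_⟩
      have hd : dist (g n ω) (g N ω) = ‖g N ω - g n ω‖ := by
        rw [dist_eq_norm, norm_sub_rev]
      have := hkey N n hn
      rw [hd]
      nlinarith [norm_nonneg (g N ω - g n ω), hε]
    exact cauchySeq_tendsto_of_complete hcs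
  set p0 : Ω → Ed k := fun ω => limUnder atTop (fun n => g n ω) with hp0def
  have htendp : ∀ᵐ ω ∂ν, Tendsto (fun n => g n ω) atTop (𝓝 (p0 ω)) := by
    filter_upwards [hcauchy] with ω hω
    exact tendsto_nhds_limUnder hω
  have hp0m : AEStronglyMeasurable p0 ν :=
    aestronglyMeasurable_of_tendsto_ae atTop (fun n => (g n).aestronglyMeasurable) htendp
  set p : L0 ν k := AEEqFun.mk p0 hp0m with hpdef
  have hpcoe : ⇑p =ᵐ[ν] p0 := AEEqFun.coeFn_mk _ hp0m
  have hptend : ∀ᵐ ω ∂ν, Tendsto (fun n => g n ω) atTop (𝓝 (p ω)) := by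
    filter_upwards [htendp, hpcoe] with ω h1 h2
    rw [h2]; exact h1
  have hpG : p ∈ G := by
    refine hcl g hgG p ?_
    exact tendstoInMeasure_of_tendsto_ae (fun n => (g n).aestronglyMeasurable) hptend
  have hpeta : ∀ᵐ ω ∂ν, ‖x ω - p ω‖ = η ω := by
    filter_upwards [hptend, hminall] with ω h1 h2
    have h3 : Tendsto (fun n => ‖x ω - g n ω‖) atTop (𝓝 ‖x ω - p ω‖) := by
      have hc : Continuous (fun v : Ed k => ‖x ω - v‖) := (continuous_const.sub continuous_id).norm
      exact (hc.tendsto (p ω)).comp h1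
    exact tendsto_nhds_unique h3 (htend ω h2)
  refine ⟨p, hpG, fun q hq => ?_⟩
  filter_upwards [hpeta, hclaim q hq] with ω h1 h2
  rw [h1]; exact h2

lemma variational {G : Set (L0 ν k)} (hconv : L0Convex ν k G) (x : L0 ν k) {p : L0 ν k}
    (hp : p ∈ G) (hmin : ∀ g ∈ G, ∀ᵐ ω ∂ν, ‖x ω - p ω‖ ≤ ‖x ω - g ω‖)
    {q : L0 ν k} (hq : q ∈ G) :
    ∀ᵐ ω ∂ν, ⟪x ω - p ω, q ω - p ω⟫_ℝ ≤ 0 := by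
  classical
  set t : ℕ → ℝ := fun n => 1/((n:ℝ)+1) with htdef
  have ht0 : ∀ n, 0 < t n := fun n => by positivity
  have ht1 : ∀ n, t n ≤ 1 := by
    intro n
    rw [htdef]
    rw [div_le_one (by positivity)]
    simp
  have hz : ∀ n : ℕ, ∃ z : L0 ν k, z ∈ G ∧
      ∀ᵐ ω ∂ν, z ω = (1 - t n) • p ω + t n • q ω := by
    intro n
    have hsm : AEStronglyMeasurable (fun ω => (1 - t n) • p ω + t n • q ω) ν :=
      ((p.stronglyMeasurable.const_smul (1 - t n)).add
        (q.stronglyMeasurable.const_smul (t n))).aestronglyMeasurable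
    refine ⟨AEEqFun.mk _ hsm, ?_, AEEqFun.coeFn_mk _ hsm⟩
    refine hconv p hp q hq (fun _ => 1 - t n) measurable_const
      (fun ω => ⟨by linarith [ht1 n], by linarith [ht0 n]⟩) _ ?_
    filter_upwards [AEEqFun.coeFn_mk _ hsm] with ω hω
    rw [hω]
    ring_nf
  choose z hzG hzcoe using hz
  have hkey : ∀ᵐ ω ∂ν, ∀ n, ‖x ω - p ω‖ ≤ ‖x ω - ((1 - t n) • p ω + t n • q ω)‖ := by
    rw [ae_all_iff]; intro n
    filter_upwards [hmin (z n) (hzG n), hzcoe n] with ω h1 h2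
    rw [← h2]; exact h1
  filter_upwards [hkey] with ω hω
  have hineq : ∀ n, ⟪x ω - p ω, q ω - p ω⟫_ℝ ≤ (t n / 2) * ‖q ω - p ω‖^2 := by
    intro n
    have h3 : x ω - ((1 - t n) • p ω + t n • q ω) = (x ω - p ω) - t n • (q ω - p ω) := by
      module
    have h4 : ‖x ω - p ω‖^2 ≤ ‖(x ω - p ω) - t n • (q ω - p ω)‖^2 := by
      rw [← h3]; exact pow_le_pow_left₀ (norm_nonneg _) (hω n) 2
    have h5 : ‖(x ω - p ω) - t n • (q ω - p ω)‖^2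
        = ‖x ω - p ω‖^2 - 2*(t n * ⟪x ω - p ω, q ω - p ω⟫_ℝ) + (t n)^2 * ‖q ω - p ω‖^2 := by
      rw [norm_sub_sq_real, real_inner_smul_right, norm_smul, Real.norm_eq_abs,
        abs_of_pos (ht0 n)]
      ring
    nlinarith [ht0 n]
  have hT : Tendsto (fun n => (t n / 2) * ‖q ω - p ω‖^2) atTop (𝓝 0) := by
    have := (one_div_tendsto.div_const 2).mul_const (‖q ω - p ω‖^2)
    simpa only [htdef, one_div, zero_div, zero_mul] using this
  exact ge_of_tendsto' hT hineq

/-- Random projection onto a `𝒯_{ε,λ}`-closed L⁰-convex subset of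
`L⁰(𝓕,ℝ^d)`: existence, uniqueness, and nonexpansiveness. -/
theorem random_projection {Ω : Type*} [MeasurableSpace Ω] (μ : Measure Ω)
    [IsProbabilityMeasure μ] (d : ℕ) (hd : 0 < d)
    (G : Set (L0 μ d)) (hne : G.Nonempty) (hcl : TelClosed μ d G) (hconv : L0Convex μ d G) :
    ∃ P : L0 μ d → L0 μ d,
      (∀ x, P x ∈ G) ∧
      -- `P x` minimizes the random distance to `x` among all elements of `G`
      (∀ x, ∀ g ∈ G, ∀ᵐ ω ∂μ, ‖x ω - P x ω‖ ≤ ‖x ω - g ω‖) ∧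
      -- uniqueness of the minimizer
      (∀ x, ∀ q ∈ G, (∀ g ∈ G, ∀ᵐ ω ∂μ, ‖x ω - q ω‖ ≤ ‖x ω - g ω‖) → q = P x) ∧
      -- nonexpansiveness
      (∀ x y, ∀ᵐ ω ∂μ, ‖P x ω - P y ω‖ ≤ ‖x ω - y ω‖) := by
  classical
  have hex := fun x : L0 μ d => exists_min G hne hcl hconv x
  choose P hPG hPmin using hex
  refine ⟨P, hPG, hPmin, ?_, ?_⟩
  · -- uniqueness
    intro x q hq hqmin
    have h1 := variational hconv x hq hqmin (hPG x)
    have h2 := variational hconv x (hPG x) (hPmin x) hq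
    refine AEEqFun.ext ?_
    filter_upwards [h1, h2] with ω hω1 hω2
    have hid : ⟪x ω - q ω, P x ω - q ω⟫_ℝ + ⟪x ω - P x ω, q ω - P x ω⟫_ℝ
        = ‖P x ω - q ω‖^2 := by
      simp only [inner_sub_left, inner_sub_right, ← real_inner_self_eq_norm_sq]
      ring
    have h0 : ‖P x ω - q ω‖^2 ≤ 0 := by linarith
    have : ‖P x ω - q ω‖ = 0 := by nlinarith [norm_nonneg (P x ω - q ω)]
    have := sub_eq_zero.mp (norm_eq_zero.mp this)
    rw [this]
  · -- nonexpansive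
    intro x y
    have h1 := variational hconv x (hPG x) (hPmin x) (hPG y)
    have h2 := variational hconv y (hPG y) (hPmin y) (hPG x)
    filter_upwards [h1, h2] with ω hω1 hω2
    have hid : ⟪x ω - P x ω, P y ω - P x ω⟫_ℝ + ⟪y ω - P y ω, P x ω - P y ω⟫_ℝ
        = ⟪x ω - y ω, P y ω - P x ω⟫_ℝ + ‖P y ω - P x ω‖^2 := by
      simp only [inner_sub_left, inner_sub_right, ← real_inner_self_eq_norm_sq]
      ring
    have hcs : ⟪x ω - y ω, P x ω - P y ω⟫_ℝ ≤ ‖x ω - y ω‖ * ‖P x ω - P y ω‖ :=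
      real_inner_le_norm _ _
    have hin : ⟪x ω - y ω, P y ω - P x ω⟫_ℝ = - ⟪x ω - y ω, P x ω - P y ω⟫_ℝ := by
      rw [show P y ω - P x ω = -(P x ω - P y ω) by abel, inner_neg_right]
    have hnr : ‖P y ω - P x ω‖ = ‖P x ω - P y ω‖ := norm_sub_rev _ _
    rw [hnr] at hid
    nlinarith [norm_nonneg (P x ω - P y ω), norm_nonneg (x ω - y ω)]

end RandomBrouwer
end
end

section
/- Let G be a σ-stable subset of L⁰(𝓕,ℝ^d) and h : G → G a map. Then h is local if and only if h is σ-stable. -/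
open MeasureTheory Filter Set Topology

noncomputable section

namespace RandomBrouwer

variable {Ω : Type*} [MeasurableSpace Ω]

variable (μ : Measure Ω) (d : ℕ)

/-- On a σ-stable subset of `L⁰(𝓕,ℝ^d)`, a self-map is local iff it is
σ-stable. -/
theorem local_iff_sigmaStable {Ω : Type*} [MeasurableSpace Ω] (μ : Measure Ω)
    [IsProbabilityMeasure μ] (d : ℕ) (hd : 0 < d)
    (G : Set (L0 μ d)) (hstab : SigmaStable μ d G)
    (h : L0 μ d → L0 μ d) (hmaps : Set.MapsTo h G G) :
    LocalOn μ d G h ↔ SigmaStableMapOn μ d G h := by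
  constructor
  · -- local → σ-stable
    intro hloc A hA v hv z hzG hz n
    exact hloc z hzG (v n) (hv n) (A n) (hA.1 n) (hz n)
  · -- σ-stable → local
    intro hσ x hx y hy A hAmeas hxy
    set A' : ℕ → Set Ω := fun n => if n = 0 then A else if n = 1 then Aᶜ else ∅ with hA'
    have hpart : IsPartition A' := by
      refine ⟨?_, ?_, ?_⟩
      · intro n
        by_cases h0 : n = 0
        · simpa [hA', h0] using hAmeas
        · by_cases h1 : n = 1
          · simpa [hA', h0, h1] using hAmeas.compl
          · simp [hA', h0, h1]
      · intro m n hmn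
        rcases Nat.eq_zero_or_pos m with hm | hm
        · rcases Nat.eq_zero_or_pos n with hn | hn
          · exact absurd (hm.trans hn.symm) hmn
          · by_cases hn1 : n = 1
            · simp [hA', hm, hn1, disjoint_compl_right]
            · simp [hA', hm, Nat.pos_iff_ne_zero.mp hn, hn1]
        · by_cases hm1 : m = 1
          · rcases Nat.eq_zero_or_pos n with hn | hn
            · simp [hA', hm1, hn, disjoint_compl_left]
            · by_cases hn1 : n = 1
              · exact absurd (hm1.trans hn1.symm) hmn
              · simp [hA', hm1, Nat.pos_iff_ne_zero.mp hn, hn1]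
          · simp [hA', Nat.pos_iff_ne_zero.mp hm, hm1]
      · apply Set.eq_univ_of_forall
        intro ω
        by_cases hω : ω ∈ A
        · exact Set.mem_iUnion.2 ⟨0, by simpa [hA'] using hω⟩
        · exact Set.mem_iUnion.2 ⟨1, by simpa [hA'] using hω⟩
    set v : ℕ → L0 μ d := fun n => if n = 0 then x else y with hv
    have hvG : ∀ n, v n ∈ G := by
      intro n; by_cases h0 : n = 0 <;> simp [hv, h0, hx, hy]
    have hconcat : IsConcat μ A' v y := by
      intro n
      by_cases h0 : n = 0
      · subst h0
        filter_upwards [hxy] with ω hω hωA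
        simp only [hA', if_pos rfl] at hωA
        simp [hv, hω hωA]
      · by_cases h1 : n = 1
        · subst h1; filter_upwards with ω hω; simp [hv]
        · filter_upwards with ω hω
          simp [hA', h0, h1] at hω
    have := hσ A' hpart v hvG y hy hconcat 0
    filter_upwards [this] with ω hω hωA
    have := hω (by simpa [hA'] using hωA)
    simp [hv] at this
    exact this.symm
end RandomBrouwer
end
end
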